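/- arXiv:2205.00453 — 8 statements merged into one kernel-verified Lean document; each statement's English description precedes it below -/
import Mathlib

section
/- In the Witt algebra W with basis {L_m : m ∈ ℤ} and bracket [L_m, L_n] = (m-n) L_{m+n}, there is no nonzero element of the second exterior power ∧²W that is invariant under the adjoint action of W, i.e. if ω ∈ ∧²W satisfies (ad L_m ⊗ 1 + 1 ⊗ ad L_m)(ω) = 0 for all m ∈ ℤ, then ω = 0. -/
open TensorProduct

/-- In the Witt algebra `W` (basis `L m`, `m : ℤ`, bracket `⁅L m, L n⁆ = (m-n) • L (m+n)`),
there is no nonzero ad-invariant element of `∧² W` (realized as antisymmetric tensors in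
`W ⊗ W`, with the Leibniz extension of the adjoint action). -/
theorem witt_no_adInvariant_wedge_two
    (W : Type) [AddCommGroup W] [Module ℂ W]
    (L : Module.Basis ℤ ℂ W)
    (β : W →ₗ[ℂ] W →ₗ[ℂ] W)
    (hβ : ∀ m n : ℤ, β (L m) (L n) = ((m - n : ℤ) : ℂ) • L (m + n))
    (ω : W ⊗[ℂ] W)
    (hanti : TensorProduct.comm ℂ W W ω = -ω)
    (hinv : ∀ m : ℤ,
      (LinearMap.rTensor W (β (L m)) + LinearMap.lTensor W (β (L m))) ω = 0) :
    ω = 0 := by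
  classical
  set f : ℤ → ℤ → (W ⊗[ℂ] W →ₗ[ℂ] ℂ) := fun p q =>
    (TensorProduct.lid ℂ ℂ).toLinearMap ∘ₗ TensorProduct.map (L.coord p) (L.coord q) with hf
  have hftmul : ∀ (p q : ℤ) (x y : W), f p q (x ⊗ₜ y) = L.coord p x * L.coord q y := by
    intro p q x y
    simp [hf, TensorProduct.lid_tmul, smul_eq_mul]
  set c : ℤ → ℤ → ℂ := fun p q => f p q ω with hc
  -- coordinate of the adjoint action on basis vectors
  have hcoordβ : ∀ (m p : ℤ) (x : W),
      L.coord p (β (L m) x) = ((2 * m - p : ℤ) : ℂ) * L.coord (p - m) x := by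
    intro m p x
    have h : L.coord p ∘ₗ β (L m) = ((2 * m - p : ℤ) : ℂ) • L.coord (p - m) := by
      apply L.ext
      intro a
      simp only [LinearMap.comp_apply, hβ, map_smul, LinearMap.smul_apply,
        Module.Basis.coord_apply, Module.Basis.repr_self, Finsupp.single_apply, smul_eq_mul]
      by_cases h1 : m + a = p
      · rw [if_pos h1, if_pos (by omega : a = p - m)]
        have : m - a = 2 * m - p := by omega
        rw [this]
      · rw [if_neg h1, if_neg (by omega : ¬ a = p - m)]
        ring
    have := LinearMap.congr_fun h x
    simpa using this
  have hr : ∀ (m p q : ℤ) (z : W ⊗[ℂ] W),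
      f p q (LinearMap.rTensor W (β (L m)) z) = ((2 * m - p : ℤ) : ℂ) * f (p - m) q z := by
    intro m p q z
    induction z using TensorProduct.induction_on with
    | zero => simp
    | tmul x y =>
        rw [LinearMap.rTensor_tmul, hftmul, hftmul, hcoordβ]
        ring
    | add a b ha hb => simp [map_add, ha, hb, mul_add]
  have hl : ∀ (m p q : ℤ) (z : W ⊗[ℂ] W),
      f p q (LinearMap.lTensor W (β (L m)) z) = ((2 * m - q : ℤ) : ℂ) * f p (q - m) z := by
    intro m p q z
    induction z using TensorProduct.induction_on with
    | zero => simp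
    | tmul x y =>
        rw [LinearMap.lTensor_tmul, hftmul, hftmul, hcoordβ]
        ring
    | add a b ha hb => simp [map_add, ha, hb, mul_add]
  -- main coefficient equation
  have heq : ∀ m p q : ℤ,
      ((2 * m - p : ℤ) : ℂ) * c (p - m) q + ((2 * m - q : ℤ) : ℂ) * c p (q - m) = 0 := by
    intro m p q
    have h := congrArg (f p q) (hinv m)
    rw [LinearMap.add_apply, map_add, hr, hl, map_zero] at h
    exact h
  -- antisymmetry of coefficients
  have hcomm : ∀ (p q : ℤ) (z : W ⊗[ℂ] W),
      f p q (TensorProduct.comm ℂ W W z) = f q p z := by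
    intro p q z
    induction z using TensorProduct.induction_on with
    | zero => simp
    | tmul x y => rw [TensorProduct.comm_tmul, hftmul, hftmul]; ring
    | add a b ha hb => simp [map_add, ha, hb]
  have hcsym : ∀ p q : ℤ, c q p = - c p q := by
    intro p q
    have h := hcomm p q ω
    rw [hanti, map_neg] at h
    simpa [hc] using h.symm
  have hc00 : c 0 0 = 0 := by
    have h := hcsym 0 0
    linear_combination h / 2
  have hdiag : ∀ p : ℤ, c p (-p) = 0 := by
    intro p
    by_cases hp : p = 0
    · subst hp; simpa using hc00
    · have h := heq p p 0
      simp only [sub_self, sub_zero, zero_sub, mul_zero] at h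
      have h1 : (2 * p - p : ℤ) = p := by ring
      have h2 : (2 * p : ℤ) = 2 * p := rfl
      rw [h1, hc00, mul_zero, zero_add] at h
      have hne : ((2 * p : ℤ) : ℂ) ≠ 0 := by
        exact_mod_cast (by omega : (2 * p : ℤ) ≠ 0)
      exact (mul_eq_zero.mp h).resolve_left hne
  have hzero : ∀ p q : ℤ, c p q = 0 := by
    intro p q
    by_cases h : p + q = 0
    · have : q = -p := by omega
      subst this
      exact hdiag p
    · have h0 := heq 0 p q
      simp only [mul_zero, zero_sub, sub_zero] at h0
      have : -((p + q : ℤ) : ℂ) * c p q = 0 := by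
        push_cast at h0 ⊢
        linear_combination h0
      have hne : -((p + q : ℤ) : ℂ) ≠ 0 := by
        simp only [neg_ne_zero]
        exact_mod_cast h
      exact (mul_eq_zero.mp this).resolve_left hne
  -- conclude via the tensor product basis
  have hrepr : ∀ (p q : ℤ) (z : W ⊗[ℂ] W),
      (L.tensorProduct L).repr z (p, q) = f p q z := by
    intro p q z
    induction z using TensorProduct.induction_on with
    | zero => simp
    | tmul x y =>
        rw [Module.Basis.tensorProduct_repr_tmul_apply, hftmul]
        simp [Module.Basis.coord_apply, mul_comm]
    | add a b ha hb => simp [map_add, ha, hb]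
  apply (L.tensorProduct L).repr.map_eq_zero_iff.mp
  ext ⟨p, q⟩
  rw [hrepr]
  simpa using hzero p q
end

section
/- In the Witt algebra W, there is no nonzero ad-invariant element of the third exterior power ∧³W: if Ω ∈ ∧³W satisfies L_m ▷ Ω = 0 for all m ∈ ℤ (where ▷ is the extension of the adjoint action to ∧³W by the Leibniz rule), then Ω = 0. -/
open TensorProduct

private lemma ite_coeff (x y : ℤ) (P Q : Prop) [Decidable P] [Decidable Q]
    (hPQ : P ↔ Q) (hxy : P → x = y) :
    (x : ℂ) * (if P then 1 else 0) = (y : ℂ) * (if Q then 1 else 0) := by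
  by_cases h : P
  · simp [h, hPQ.mp h, hxy h]
  · have hq : ¬Q := fun hq => h (hPQ.mpr hq)
    simp [h, hq]

/-- In the Witt algebra `W`, there is no nonzero ad-invariant element of `∧³ W`,
realized as totally antisymmetric tensors in `W ⊗ (W ⊗ W)`, with the Leibniz
extension of the adjoint action. -/
theorem witt_no_adInvariant_wedge_three
    (W : Type) [AddCommGroup W] [Module ℂ W]
    (L : Module.Basis ℤ ℂ W)
    (β : W →ₗ[ℂ] W →ₗ[ℂ] W)
    (hβ : ∀ m n : ℤ, β (L m) (L n) = ((m - n : ℤ) : ℂ) • L (m + n))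
    (Ω : W ⊗[ℂ] (W ⊗[ℂ] W))
    -- antisymmetry under the swap of the last two tensor factors
    (hanti23 : LinearMap.lTensor W (TensorProduct.comm ℂ W W).toLinearMap Ω = -Ω)
    -- antisymmetry under the swap of the first two tensor factors
    (hanti12 : (TensorProduct.assoc ℂ W W W)
        (LinearMap.rTensor W (TensorProduct.comm ℂ W W).toLinearMap
          ((TensorProduct.assoc ℂ W W W).symm Ω)) = -Ω)
    -- ad-invariance: `L m ▷ Ω = 0` for all `m`
    (hinv : ∀ m : ℤ,
      (LinearMap.rTensor (W ⊗[ℂ] W) (β (L m))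
        + LinearMap.lTensor W (LinearMap.rTensor W (β (L m)))
        + LinearMap.lTensor W (LinearMap.lTensor W (β (L m)))) Ω = 0) :
    Ω = 0 := by
  classical
  set B : Module.Basis (ℤ × ℤ × ℤ) ℂ (W ⊗[ℂ] (W ⊗[ℂ] W)) :=
    L.tensorProduct (L.tensorProduct L) with hBdef
  by_contra hΩ
  have hcne : B.repr Ω ≠ 0 := by
    intro h
    exact hΩ (by simpa using congrArg B.repr.symm h)
  have hne : (B.repr Ω).support.Nonempty := Finsupp.support_nonempty_iff.mpr hcne
  set N : ℤ := (B.repr Ω).support.sup' hne (fun p => p.1) with hN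
  have hbound : ∀ p ∈ (B.repr Ω).support, p.1 ≤ N := fun p hp =>
    Finset.le_sup' (fun p : ℤ × ℤ × ℤ => p.1) hp
  obtain ⟨⟨i, j, k⟩, hp₀⟩ := hne
  set m : ℤ := max (N - i + 1) (i + 1) with hm
  set D : (W ⊗[ℂ] (W ⊗[ℂ] W)) →ₗ[ℂ] (W ⊗[ℂ] (W ⊗[ℂ] W)) :=
    LinearMap.rTensor (W ⊗[ℂ] W) (β (L m))
      + LinearMap.lTensor W (LinearMap.rTensor W (β (L m)))
      + LinearMap.lTensor W (LinearMap.lTensor W (β (L m))) with hD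
  have hDB : ∀ a b c : ℤ, D (B (a, b, c)) =
      ((m - a : ℤ) : ℂ) • B (m + a, b, c)
      + ((m - b : ℤ) : ℂ) • B (a, m + b, c)
      + ((m - c : ℤ) : ℂ) • B (a, b, m + c) := by
    intro a b c
    simp [hD, hBdef, Module.Basis.tensorProduct_apply, LinearMap.rTensor_tmul,
      LinearMap.lTensor_tmul, hβ, TensorProduct.smul_tmul, TensorProduct.tmul_smul]
  have key : ∀ q : ℤ × ℤ × ℤ,
      (B.coord q).comp D =
        ((2*m - q.1 : ℤ) : ℂ) • B.coord (q.1 - m, q.2.1, q.2.2)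
        + ((2*m - q.2.1 : ℤ) : ℂ) • B.coord (q.1, q.2.1 - m, q.2.2)
        + ((2*m - q.2.2 : ℤ) : ℂ) • B.coord (q.1, q.2.1, q.2.2 - m) := by
    intro q
    apply B.ext
    rintro ⟨a, b, c⟩
    obtain ⟨q1, q2, q3⟩ := q
    simp only [LinearMap.comp_apply, hDB a b c, map_add, map_smul,
      LinearMap.add_apply, LinearMap.smul_apply, Module.Basis.coord_apply,
      Module.Basis.repr_self, Finsupp.single_apply, smul_eq_mul]
    congr 1
    · congr 1
      · exact ite_coeff _ _ _ _
          (by simp [Prod.ext_iff]; intros; omega)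
          (by rintro ⟨h1, h2, h3⟩; omega)
      · exact ite_coeff _ _ _ _
          (by simp [Prod.ext_iff]; intros; omega)
          (by rintro ⟨h1, h2, h3⟩; omega)
    · exact ite_coeff _ _ _ _
        (by simp [Prod.ext_iff]; intros; omega)
        (by rintro ⟨h1, h2, h3⟩; omega)
  have hzero : ((2*m - (i+m) : ℤ) : ℂ) * B.repr Ω (i + m - m, j, k)
      + ((2*m - j : ℤ) : ℂ) * B.repr Ω (i + m, j - m, k)
      + ((2*m - k : ℤ) : ℂ) * B.repr Ω (i + m, j, k - m) = 0 := by
    have := congrArg (fun f : (W ⊗[ℂ] (W ⊗[ℂ] W)) →ₗ[ℂ] ℂ => f Ω) (key (i + m, j, k))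
    simp only [LinearMap.comp_apply, LinearMap.add_apply, LinearMap.smul_apply,
      smul_eq_mul, Module.Basis.coord_apply] at this
    rw [hinv m] at this
    simpa using this.symm
  have hmge : N - i + 1 ≤ m := le_max_left _ _
  have hmgi : i + 1 ≤ m := le_max_right _ _
  have hnot1 : B.repr Ω (i + m, j - m, k) = 0 := by
    by_contra h
    have := hbound _ (Finsupp.mem_support_iff.mpr h)
    simp only at this; omega
  have hnot2 : B.repr Ω (i + m, j, k - m) = 0 := by
    by_contra h
    have := hbound _ (Finsupp.mem_support_iff.mpr h)
    simp only at this; omega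
  have hik : (i + m - m : ℤ) = i := by omega
  rw [hik, hnot1, hnot2] at hzero
  have hmi : ((2*m - (i+m) : ℤ) : ℂ) ≠ 0 := by
    rw [Int.cast_ne_zero]; omega
  have : B.repr Ω (i, j, k) = 0 := by
    have h := hzero
    simp only [mul_zero, add_zero] at h
    exact (mul_eq_zero.mp h).resolve_left hmi
  exact Finsupp.mem_support_iff.mp hp₀ this
end

section
/- Every 1-cocycle of nonzero degree on the Witt algebra with values in ∧²W is a coboundary. Precisely: if δ : W → ∧²W is a 1-cocycle that is homogeneous of degree d ≠ 0 (meaning δ(L_m) lies in the span of {L_i ∧ L_j : i + j = m + d} for all m), then there exists r ∈ ∧²W with δ(L_m) = L_m ▷ r for all m. -/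
open TensorProduct

/-- Every 1-cocycle of nonzero degree `d` on the Witt algebra with values in `∧²W`
is a coboundary: if `δ (L m)` lies in the span of `{L i ∧ L j : i + j = m + d}` for
all `m`, then `δ = x ↦ x ▷ r` for some `r ∈ ∧²W`. -/
theorem witt_nonzero_degree_cocycle_is_coboundary
    (W : Type) [AddCommGroup W] [Module ℂ W]
    (L : Module.Basis ℤ ℂ W)
    (β : W →ₗ[ℂ] W →ₗ[ℂ] W)
    (hβ : ∀ m n : ℤ, β (L m) (L n) = ((m - n : ℤ) : ℂ) • L (m + n))
    (δ : W →ₗ[ℂ] W ⊗[ℂ] W)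
    (hcoc : ∀ x y : W, δ (β x y)
        = (LinearMap.rTensor W (β x) + LinearMap.lTensor W (β x)) (δ y)
        - (LinearMap.rTensor W (β y) + LinearMap.lTensor W (β y)) (δ x))
    (d : ℤ) (hd : d ≠ 0)
    (hdeg : ∀ m : ℤ, δ (L m) ∈ Submodule.span ℂ
      {w : W ⊗[ℂ] W | ∃ i j : ℤ, i + j = m + d ∧
        w = L i ⊗ₜ[ℂ] L j - L j ⊗ₜ[ℂ] L i}) :
    ∃ r : W ⊗[ℂ] W, TensorProduct.comm ℂ W W r = -r ∧
      ∀ x : W, δ x = (LinearMap.rTensor W (β x) + LinearMap.lTensor W (β x)) r := by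
  classical
  have hdc : (d : ℂ) ≠ 0 := by exact_mod_cast hd
  set r : W ⊗[ℂ] W := (-(d : ℂ)⁻¹) • δ (L 0) with hr
  -- antisymmetry of δ (L 0)
  have hanti : TensorProduct.comm ℂ W W (δ (L 0)) = -(δ (L 0)) := by
    have hsub : Submodule.span ℂ
        {w : W ⊗[ℂ] W | ∃ i j : ℤ, i + j = 0 + d ∧
          w = L i ⊗ₜ[ℂ] L j - L j ⊗ₜ[ℂ] L i} ≤
        LinearMap.ker ((TensorProduct.comm ℂ W W).toLinearMap + LinearMap.id) := by
      rw [Submodule.span_le]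
      rintro w ⟨i, j, -, rfl⟩
      simp only [Set.mem_setOf_eq, SetLike.mem_coe, LinearMap.mem_ker,
        LinearMap.add_apply, LinearMap.id_apply, LinearEquiv.coe_coe,
        map_sub, TensorProduct.comm_tmul]
      abel
    have h0 := hsub (hdeg 0)
    rw [LinearMap.mem_ker] at h0
    simp only [LinearMap.add_apply, LinearMap.id_apply, LinearEquiv.coe_coe] at h0
    exact eq_neg_of_add_eq_zero_left h0
  -- action of L 0 on the degree-(m+d) part
  have hL0act : ∀ m : ℤ,
      (LinearMap.rTensor W (β (L 0)) + LinearMap.lTensor W (β (L 0))) (δ (L m))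
        = (-((m + d : ℤ) : ℂ)) • δ (L m) := by
    intro m
    have hsub : Submodule.span ℂ
        {w : W ⊗[ℂ] W | ∃ i j : ℤ, i + j = m + d ∧
          w = L i ⊗ₜ[ℂ] L j - L j ⊗ₜ[ℂ] L i} ≤
        LinearMap.ker ((LinearMap.rTensor W (β (L 0)) + LinearMap.lTensor W (β (L 0)))
          - (-((m + d : ℤ) : ℂ)) • LinearMap.id) := by
      rw [Submodule.span_le]
      rintro w ⟨i, j, hij, rfl⟩
      simp only [SetLike.mem_coe, LinearMap.mem_ker, LinearMap.sub_apply,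
        LinearMap.add_apply, LinearMap.smul_apply, LinearMap.id_apply, map_sub,
        LinearMap.rTensor_tmul, LinearMap.lTensor_tmul, hβ]
      have hi : (0 : ℤ) + i = i := by ring
      have hj : (0 : ℤ) + j = j := by ring
      rw [hi, hj]
      have hij' : (i : ℂ) + (j : ℂ) = (m : ℂ) + (d : ℂ) := by exact_mod_cast congrArg (Int.cast : ℤ → ℂ) hij
      have : -((m + d : ℤ) : ℂ) = ((0 - i : ℤ) : ℂ) + ((0 - j : ℤ) : ℂ) := by
        push_cast; linear_combination hij'
      rw [this]
      simp only [TensorProduct.smul_tmul', TensorProduct.tmul_smul, smul_sub, add_smul]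
      abel
    have h0 := hsub (hdeg m)
    rw [LinearMap.mem_ker] at h0
    simp only [LinearMap.sub_apply, LinearMap.add_apply, LinearMap.smul_apply,
      LinearMap.id_apply] at h0
    have := sub_eq_zero.mp h0
    simpa using this
  -- key identity on basis vectors
  have key : ∀ m : ℤ, δ (L m)
      = (LinearMap.rTensor W (β (L m)) + LinearMap.lTensor W (β (L m))) r := by
    intro m
    have hc := hcoc (L m) (L 0)
    rw [hβ m 0] at hc
    have hm0 : ((m - 0 : ℤ) : ℂ) • L (m + 0) = (m : ℂ) • L m := by
      norm_num
    rw [hm0, map_smul, hL0act m] at hc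
    -- hc : (m:ℂ) • δ (L m) = D(L m) (δ (L 0)) - (-(m+d)) • δ (L m)
    have hD : (LinearMap.rTensor W (β (L m)) + LinearMap.lTensor W (β (L m))) (δ (L 0))
        = (-(d : ℂ)) • δ (L m) := by
      have h2 := (eq_sub_iff_add_eq.mp hc).symm
      rw [h2, ← add_smul]
      congr 1
      push_cast; ring
    rw [hr, map_smul, hD, smul_smul]
    rw [show (-(d : ℂ)⁻¹) * (-(d : ℂ)) = 1 by field_simp]
    rw [one_smul]
  -- package x ↦ D x r as a linear map and use basis extensionality
  refine ⟨r, ?_, ?_⟩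
  · rw [hr, map_smul, hanti, smul_neg]
  · set Φ : W →ₗ[ℂ] W ⊗[ℂ] W :=
      { toFun := fun x => (LinearMap.rTensor W (β x) + LinearMap.lTensor W (β x)) r
        map_add' := by
          intro x y
          simp [map_add, LinearMap.rTensor_add, LinearMap.lTensor_add]
          abel
        map_smul' := by
          intro c x
          simp [map_smul, LinearMap.rTensor_smul, LinearMap.lTensor_smul,
            smul_add] } with hΦ
    have : δ = Φ := by
      apply L.ext
      intro m
      exact key m
    intro x
    have hx := congrArg (fun f => f x) this
    simpa [hΦ] using hx
end

section
/- If δ is a degree-zero 1-cocycle on the Witt algebra W with values in ∧²W (i.e. δ(L_m) is a linear combination of L_{m-i} ∧ L_i), then δ(L_0) = 0. -/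
set_option maxHeartbeats 1000000


open TensorProduct

/-- If `δ` is a degree-zero 1-cocycle on the Witt algebra `W` with values in `∧²W`
(i.e. `δ (L m)` is a linear combination of wedges `L (m - i) ∧ L i`), then
`δ (L 0) = 0`. -/
theorem witt_degree_zero_cocycle_vanishes_on_L0
    (W : Type) [AddCommGroup W] [Module ℂ W]
    (L : Module.Basis ℤ ℂ W)
    (β : W →ₗ[ℂ] W →ₗ[ℂ] W)
    (hβ : ∀ m n : ℤ, β (L m) (L n) = ((m - n : ℤ) : ℂ) • L (m + n))
    (δ : W →ₗ[ℂ] W ⊗[ℂ] W)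
    (hcoc : ∀ x y : W, δ (β x y)
        = (LinearMap.rTensor W (β x) + LinearMap.lTensor W (β x)) (δ y)
        - (LinearMap.rTensor W (β y) + LinearMap.lTensor W (β y)) (δ x))
    (hdeg : ∀ m : ℤ, δ (L m) ∈ Submodule.span ℂ
      {w : W ⊗[ℂ] W | ∃ i : ℤ,
        w = L (m - i) ⊗ₜ[ℂ] L i - L i ⊗ₜ[ℂ] L (m - i)}) :
    δ (L 0) = 0 := by
  classical
  set Bs : Module.Basis (ℤ × ℤ) ℂ (W ⊗[ℂ] W) := Module.Basis.tensorProduct L L with hBs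
  -- Step A: support and antisymmetry of the coordinates of δ (L 0)
  have hA : ∀ p q : ℤ, (p + q ≠ 0 → Bs.repr (δ (L 0)) (p, q) = 0) ∧
      Bs.repr (δ (L 0)) (p, q) = - Bs.repr (δ (L 0)) (q, p) := by
    intro p q
    refine Submodule.span_induction
      (p := fun w _ => (p + q ≠ 0 → Bs.repr w (p, q) = 0) ∧
        Bs.repr w (p, q) = - Bs.repr w (q, p)) ?_ ?_ ?_ ?_ (hdeg 0)
    · rintro w ⟨i, rfl⟩
      constructor
      · intro hpq
        simp only [map_sub, Finsupp.sub_apply, hBs,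
          Module.Basis.tensorProduct_repr_tmul_apply, Module.Basis.repr_self,
          Finsupp.single_apply, smul_eq_mul]
        split_ifs <;> first | (exfalso; omega) | norm_num
      · simp only [map_sub, Finsupp.sub_apply, hBs,
          Module.Basis.tensorProduct_repr_tmul_apply, Module.Basis.repr_self,
          Finsupp.single_apply, smul_eq_mul]
        split_ifs <;> first | (exfalso; omega) | norm_num
    · simp
    · rintro x y hx hy ⟨hx1, hx2⟩ ⟨hy1, hy2⟩
      constructor
      · intro h; simp [hx1 h, hy1 h]
      · simp only [map_add, Finsupp.add_apply, hx2, hy2]; ring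
    · rintro a x hx ⟨hx1, hx2⟩
      constructor
      · intro h; simp [hx1 h]
      · simp only [map_smul, Finsupp.smul_apply, hx2, smul_eq_mul]; ring
  -- Step B : (rTensor (β (L 1)) + lTensor (β (L 1))) (δ (L 0)) = 0
  have hA1 : (LinearMap.rTensor W (β (L 0)) + LinearMap.lTensor W (β (L 0))) (δ (L 1))
      = (-1 : ℂ) • δ (L 1) := by
    refine Submodule.span_induction
      (p := fun w _ => (LinearMap.rTensor W (β (L 0)) + LinearMap.lTensor W (β (L 0))) w
        = (-1 : ℂ) • w) ?_ ?_ ?_ ?_ (hdeg 1)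
    · rintro w ⟨i, rfl⟩
      simp only [map_sub, LinearMap.add_apply, LinearMap.rTensor_tmul,
        LinearMap.lTensor_tmul, hβ, ← TensorProduct.smul_tmul', TensorProduct.tmul_smul,
        zero_add, smul_sub]
      push_cast
      module
    · simp
    · intro x y hx hy h1 h2; simp [map_add, h1, h2, smul_add]
    · intro a x hx h1
      rw [map_smul, h1, smul_comm]
  have hB : (LinearMap.rTensor W (β (L 1)) + LinearMap.lTensor W (β (L 1))) (δ (L 0)) = 0 := by
    have h := hcoc (L 0) (L 1)
    rw [hβ 0 1] at h
    have h01 : ((0 - 1 : ℤ) : ℂ) = -1 := by norm_num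
    rw [h01] at h
    rw [show ((0 : ℤ) + 1) = (1 : ℤ) by ring] at h
    rw [map_smul, hA1] at h
    linear_combination (norm := module) h
  -- Step C : coordinate formula for (rTensor (β (L 1)) + lTensor (β (L 1)))
  have key : ∀ (a b : ℤ) (z : W ⊗[ℂ] W),
      Bs.repr ((LinearMap.rTensor W (β (L 1)) + LinearMap.lTensor W (β (L 1))) z) (a, b)
        = ((2 - a : ℤ) : ℂ) * Bs.repr z (a - 1, b)
          + ((2 - b : ℤ) : ℂ) * Bs.repr z (a, b - 1) := by
    intro a b
    suffices h : ((Finsupp.lapply (a, b) : ((ℤ × ℤ) →₀ ℂ) →ₗ[ℂ] ℂ).comp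
        (Bs.repr.toLinearMap.comp
          (LinearMap.rTensor W (β (L 1)) + LinearMap.lTensor W (β (L 1)))))
        = (((2 - a : ℤ) : ℂ) • ((Finsupp.lapply (a - 1, b) : ((ℤ × ℤ) →₀ ℂ) →ₗ[ℂ] ℂ).comp
            Bs.repr.toLinearMap)
          + ((2 - b : ℤ) : ℂ) • ((Finsupp.lapply (a, b - 1) : ((ℤ × ℤ) →₀ ℂ) →ₗ[ℂ] ℂ).comp
            Bs.repr.toLinearMap)) by
      intro z
      simpa using LinearMap.congr_fun h z
    refine Bs.ext ?_
    rintro ⟨p, q⟩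
    simp only [LinearMap.comp_apply, LinearMap.add_apply, LinearMap.smul_apply,
      Finsupp.lapply_apply, LinearEquiv.coe_coe, hBs, Module.Basis.tensorProduct_apply,
      LinearMap.rTensor_tmul, LinearMap.lTensor_tmul, hβ,
      ← TensorProduct.smul_tmul', TensorProduct.tmul_smul, zero_add,
      map_add, map_smul, Finsupp.add_apply, Finsupp.smul_apply,
      Module.Basis.tensorProduct_repr_tmul_apply, Module.Basis.repr_self, Finsupp.single_apply,
      smul_eq_mul]
    split_ifs <;> first | (exfalso; omega) | (subst_vars; push_cast; ring)
  -- coordinates of δ (L 0) on the antidiagonal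
  set c : ℤ → ℂ := fun i => Bs.repr (δ (L 0)) (-i, i) with hc
  have hcdef : ∀ i : ℤ, c i = Bs.repr (δ (L 0)) (-i, i) := fun i => rfl
  have hrec : ∀ i : ℤ, ((1 + i : ℤ) : ℂ) * c i + ((2 - i : ℤ) : ℂ) * c (i - 1) = 0 := by
    intro i
    have h := key (1 - i) i (δ (L 0))
    rw [hB] at h
    simp only [map_zero, Finsupp.coe_zero, Pi.zero_apply] at h
    rw [show (1 - i - 1 : ℤ) = -i by ring] at h
    rw [show (2 - (1 - i) : ℤ) = 1 + i by ring] at h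
    rw [hcdef i, hcdef (i - 1)]
    rw [show ((1 - i : ℤ)) = -(i - 1) by ring] at h
    exact h.symm
  have hc0 : c 0 = 0 := by
    have h := (hA 0 0).2
    have h0 : c 0 = Bs.repr (δ (L 0)) (0, 0) := by rw [hcdef]; norm_num
    rw [h0]
    linear_combination h / 2
  have hnat : ∀ n : ℕ, c n = 0 := by
    intro n
    induction n with
    | zero => simpa using hc0
    | succ k ih =>
      have h := hrec (k + 1)
      rw [show ((k : ℤ) + 1 - 1) = (k : ℤ) by ring, ih] at h
      have hne : ((1 + ((k : ℤ) + 1) : ℤ) : ℂ) ≠ 0 := by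
        push_cast
        intro hcontra
        have := congrArg Complex.re hcontra
        simp at this
        linarith [Nat.cast_nonneg (α := ℝ) k]
      have hmul : ((1 + ((k : ℤ) + 1) : ℤ) : ℂ) * c ((k : ℤ) + 1) = 0 := by
        linear_combination h
      push_cast
      exact (mul_eq_zero.mp hmul).resolve_left hne
  have hnonneg : ∀ j : ℤ, 0 ≤ j → c j = 0 := by
    intro j hj
    lift j to ℕ using hj
    exact hnat j
  have hall : ∀ i : ℤ, c i = 0 := by
    intro i
    rcases le_or_gt (0 : ℤ) i with hi | hi
    · exact hnonneg i hi
    · have h2 : c (-i) = - c i := by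
        have h := (hA i (-i)).2
        rw [hcdef (-i), hcdef i, neg_neg]
        linear_combination h
      have h3 : c (-i) = 0 := hnonneg (-i) (by omega)
      linear_combination h2 - h3
  -- conclude
  have hzero : Bs.repr (δ (L 0)) = 0 := by
    ext pq
    obtain ⟨p, q⟩ := pq
    by_cases hpq : p + q = 0
    · have hq : p = -q := by omega
      subst hq
      have := hall q
      rw [hcdef q] at this
      simpa using this
    · simpa using (hA p q).1 hpq
  have := Bs.repr.injective (by simpa using hzero)
  simpa using this
end

section
/- The first cohomology group H¹(B₃, ∧²B₃) of the three-dimensional BMS algebra with values in the second exterior power of the adjoint module vanishes. -/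
noncomputable section
namespace BMS3

/-- bounded (finite) support for `ℤ`-indexed families of complex numbers -/
def Bdd (f : ℤ → ℂ) : Prop := ∃ N : ℤ, ∀ i : ℤ, N ≤ |i| → f i = 0

lemma bdd_zero : Bdd (fun _ => (0:ℂ)) := ⟨0, fun _ _ => rfl⟩

lemma Bdd.add {f h : ℤ → ℂ} (hf : Bdd f) (hh : Bdd h) : Bdd (fun i => f i + h i) := by
  obtain ⟨N, hN⟩ := hf; obtain ⟨M, hM⟩ := hh
  refine ⟨max N M, fun i hi => ?_⟩
  show f i + h i = 0
  rw [hN i (le_trans (le_max_left _ _) hi), hM i (le_trans (le_max_right _ _) hi), add_zero]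

lemma Bdd.sub {f h : ℤ → ℂ} (hf : Bdd f) (hh : Bdd h) : Bdd (fun i => f i - h i) := by
  obtain ⟨N, hN⟩ := hf; obtain ⟨M, hM⟩ := hh
  refine ⟨max N M, fun i hi => ?_⟩
  show f i - h i = 0
  rw [hN i (le_trans (le_max_left _ _) hi), hM i (le_trans (le_max_right _ _) hi), sub_zero]

/-- upward propagation of non-vanishing kills a tail -/
lemma tail_up {f : ℤ → ℂ} {a : ℤ} {c d : ℤ → ℂ}
    (hd : ∀ i, a ≤ i → d i ≠ 0)
    (hrec : ∀ i, a ≤ i → c i * f (i+1) = d i * f i)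
    (hfin : Bdd f) :
    ∀ i, a ≤ i → f i = 0 := by
  intro i hi
  by_contra hne
  have key : ∀ k : ℕ, f (i + k) ≠ 0 := by
    intro k; induction k with
    | zero => simpa using hne
    | succ k ih =>
        intro h0
        have h1 := hrec (i+k) (by omega)
        rw [show (i + (k:ℤ)) + 1 = i + ((k:ℕ)+1 : ℕ) by push_cast; ring, h0, mul_zero] at h1
        exact ih (by
          rcases mul_eq_zero.mp h1.symm with h | h
          · exact absurd h (hd (i+k) (by omega))
          · exact h)
  obtain ⟨N, hN⟩ := hfin
  have hk : (0:ℤ) ≤ |N| + |i| := by positivity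
  refine key (|N| + |i|).toNat ?_
  apply hN
  rw [Int.toNat_of_nonneg hk]
  have h3 := neg_abs_le i
  have h4 := le_abs_self N
  have h5 := abs_nonneg i
  have h7 := abs_nonneg N
  have h6 : 0 ≤ i + (|N| + |i|) := by omega
  rw [abs_of_nonneg h6]; omega

lemma tail_down {f : ℤ → ℂ} {a : ℤ} {c d : ℤ → ℂ}
    (hd : ∀ i, i ≤ a → d i ≠ 0)
    (hrec : ∀ i, i ≤ a → c i * f (i-1) = d i * f i)
    (hfin : Bdd f) :
    ∀ i, i ≤ a → f i = 0 := by
  intro i hi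
  by_contra hne
  have key : ∀ k : ℕ, f (i - k) ≠ 0 := by
    intro k; induction k with
    | zero => simpa using hne
    | succ k ih =>
        intro h0
        have h1 := hrec (i-k) (by omega)
        rw [show (i - (k:ℤ)) - 1 = i - ((k:ℕ)+1 : ℕ) by push_cast; ring, h0, mul_zero] at h1
        exact ih (by
          rcases mul_eq_zero.mp h1.symm with h | h
          · exact absurd h (hd (i-k) (by omega))
          · exact h)
  obtain ⟨N, hN⟩ := hfin
  have hk : (0:ℤ) ≤ |N| + |i| := by positivity
  refine key (|N| + |i|).toNat ?_
  apply hN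
  rw [Int.toNat_of_nonneg hk]
  have h3 := le_abs_self i
  have h4 := le_abs_self N
  have h5 := abs_nonneg i
  have h7 := abs_nonneg N
  have h6 : i - (|N| + |i|) ≤ 0 := by omega
  rw [abs_of_nonpos h6]; omega

/-- nonvanishing of integer casts -/
lemma zne {a : ℤ} (h : a ≠ 0) : ((a:ℂ)) ≠ 0 := Int.cast_ne_zero.mpr h

/-- the kernel lemma: a finitely supported solution of the degree-`1` and degree-`2`
homogeneous coboundary equations vanishes. -/
lemma ker {h : ℤ → ℂ} (hB : Bdd h)
    (h1 : ∀ i : ℤ, ((2 - i:ℤ):ℂ) * h (i-1) + ((1 + i:ℤ):ℂ) * h i = 0)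
    (h2 : ∀ i : ℤ, ((4 - i:ℤ):ℂ) * h (i-2) + ((2 + i:ℤ):ℂ) * h i = 0) :
    ∀ i, h i = 0 := by
  -- upper tail : for i ≥ 2, h i = 0
  have hup : ∀ i, (2:ℤ) ≤ i → h i = 0 := by
    refine tail_up (c := fun i => ((2 + i:ℤ):ℂ)) (d := fun i => ((i - 1:ℤ):ℂ)) ?_ ?_ hB
    · intro i hi; exact zne (by omega)
    · intro i _
      have e := h1 (i+1)
      rw [show (i+1) - 1 = i by ring] at e
      push_cast at e ⊢
      linear_combination e
  have hdown : ∀ i, i ≤ (-2:ℤ) → h i = 0 := by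
    refine tail_down (c := fun i => ((2 - i:ℤ):ℂ)) (d := fun i => ((-1 - i:ℤ):ℂ)) ?_ ?_ hB
    · intro i hi; exact zne (by omega)
    · intro i _
      have e := h1 i
      push_cast at e ⊢
      linear_combination e
  have e0 := h1 0
  have e1 := h1 1
  have e2 := h2 1
  have hm1 : h (-1) = 0 := by
    rw [show (0:ℤ)-1 = -1 by ring] at e0
    rw [show (1:ℤ)-1 = 0 by ring] at e1
    rw [show (1:ℤ)-2 = -1 by ring] at e2
    push_cast at e0 e1 e2
    -- 2h(-1) + h0 = 0 ; h0 + 2h1 = 0 ; 3h(-1)+3h1 = 0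
    have : h 1 = h (-1) := by linear_combination (e1 - e0) / 2
    have h2' : (2:ℂ) * h (-1) = 0 := by linear_combination e2/3 - this
    exact (mul_eq_zero.mp h2').resolve_left two_ne_zero
  have h0z : h 0 = 0 := by
    have e0 := h1 0
    rw [show (0:ℤ)-1 = -1 by ring] at e0
    push_cast at e0
    rw [hm1] at e0
    linear_combination e0
  have h1z : h 1 = 0 := by
    have e1 := h1 1
    rw [show (1:ℤ)-1 = 0 by ring] at e1
    push_cast at e1
    rw [h0z] at e1
    have h2' : (2:ℂ) * h 1 = 0 := by linear_combination e1
    exact (mul_eq_zero.mp h2').resolve_left two_ne_zero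
  intro i
  rcases lt_trichotomy i 0 with hlt | heq | hgt
  · rcases eq_or_lt_of_le (show i ≤ -1 by omega) with he | hl
    · rw [he]; exact hm1
    · exact hdown i (by omega)
  · rw [heq]; exact h0z
  · rcases eq_or_lt_of_le (show 1 ≤ i by omega) with he | hl
    · rw [← he]; exact h1z
    · exact hup i (by omega)


def dco (φ : ℤ → ℂ) (m i : ℤ) : ℂ := ((2*m - i:ℤ):ℂ) * φ (i-m) + ((m+i:ℤ):ℂ) * φ i

lemma dco_cocycle (φ : ℤ → ℂ) (m n i : ℤ) :
    ((m-n:ℤ):ℂ) * dco φ (m+n) i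
      = ((2*m-i:ℤ):ℂ) * dco φ n (i-m) + ((m-n+i:ℤ):ℂ) * dco φ n i
        - ((2*n-i:ℤ):ℂ) * dco φ m (i-n) - ((n-m+i:ℤ):ℂ) * dco φ m i := by
  simp only [dco]
  rw [show i - m - n = i - (m+n) by ring, show i - n - m = i - (m+n) by ring]
  push_cast
  ring

lemma dco_zero (φ : ℤ → ℂ) (i : ℤ) : dco φ 0 i = 0 := by
  simp only [dco]; push_cast; ring

lemma bdd_dco {φ : ℤ → ℂ} (h : Bdd φ) (m : ℤ) : Bdd (fun i => dco φ m i) := by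
  obtain ⟨N, hN⟩ := h
  refine ⟨|N| + |m| + 1, fun i hi => ?_⟩
  have h1 : φ (i - m) = 0 := by
    apply hN; have := le_abs_self N; have := abs_nonneg m
    have := abs_sub_abs_le_abs_sub i m; have := abs_nonneg (i-m); omega
  have h2 : φ i = 0 := by
    apply hN; have := le_abs_self N; have := abs_nonneg m; omega
  simp only [dco, h1, h2, mul_zero, add_zero]

/-- recursive construction of the potential, lower part -/
def philo (F1 : ℤ → ℂ) (N : ℤ) : ℕ → ℂ
  | 0 => 0
  | (t+1) => (F1 ((t:ℤ) - N) - ((2 - ((t:ℤ) - N):ℤ):ℂ) * philo F1 N t) / ((1 + ((t:ℤ) - N):ℤ):ℂ)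

/-- recursive construction of the potential, upper part -/
def phihi (F1 : ℤ → ℂ) (N : ℤ) : ℕ → ℂ
  | 0 => 0
  | (t+1) => (F1 (N - t) - ((N + 1 - t:ℤ):ℂ) * phihi F1 N t) / ((2 - N + t:ℤ):ℂ)

/-- the potential associated to the degree-one data of a cocycle -/
def wphi (F1 : ℤ → ℂ) (N : ℤ) : ℤ → ℂ := fun i =>
  if i ≤ -2 then philo F1 N (i + N + 1).toNat
  else if i = -1 then 0
  else if i = 0 then F1 0
  else if i = 1 then (F1 1 - F1 0) / 2
  else if i < N then phihi F1 N (N - i).toNat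
  else 0

section wphi
variable {F1 : ℤ → ℂ} {N : ℤ}

lemma wphi_lo (hN : 3 ≤ N) : ∀ i : ℤ, i ≤ -N-1 → wphi F1 N i = 0 := by
  intro i hi
  have h2 : i ≤ -2 := by omega
  simp only [wphi, if_pos h2]
  have : (i + N + 1).toNat = 0 := by omega
  rw [this]; rfl

lemma wphi_hi (hN : 3 ≤ N) : ∀ i : ℤ, N ≤ i → wphi F1 N i = 0 := by
  intro i hi
  have c1 : ¬ (i ≤ -2) := by omega
  have c2 : ¬ (i = -1) := by omega
  have c3 : ¬ (i = 0) := by omega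
  have c4 : ¬ (i = 1) := by omega
  have c5 : ¬ (i < N) := by omega
  simp only [wphi, if_neg c1, if_neg c2, if_neg c3, if_neg c4, if_neg c5]

lemma bdd_wphi (hN : 3 ≤ N) : Bdd (wphi F1 N) := by
  refine ⟨N + 1, fun i hi => ?_⟩
  rcases le_or_gt 0 i with h | h
  · rw [abs_of_nonneg h] at hi; exact wphi_hi hN i (by omega)
  · rw [abs_of_neg h] at hi; exact wphi_lo hN i (by omega)

lemma wphi_W1 (hN : 3 ≤ N) (hs : ∀ i : ℤ, N ≤ |i| → F1 i = 0) : ∀ i : ℤ, i ≠ -1 → i ≠ 2 →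
    F1 i = ((2 - i:ℤ):ℂ) * wphi F1 N (i-1) + ((1+i:ℤ):ℂ) * wphi F1 N i := by
  intro i hi1 hi2
  rcases le_or_gt i (-2) with hle | hgt
  · -- lower region
    rcases le_or_gt i (-N-1) with hll | hlg
    · rw [wphi_lo hN i hll, wphi_lo hN (i-1) (by omega),
        hs i (by rw [abs_of_nonpos (by omega : i ≤ 0)]; omega)]
      ring
    · -- -N ≤ i ≤ -2 : definitional recursion
      have hphii : wphi F1 N i = philo F1 N ((i + N).toNat + 1) := by
        simp only [wphi, if_pos hle]
        congr 1; omega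
      have hphiprev : wphi F1 N (i-1) = philo F1 N (i + N).toNat := by
        simp only [wphi, if_pos (show i - 1 ≤ -2 by omega)]
        congr 1; omega
      have hcast : ((i + N).toNat : ℤ) = i + N := by omega
      rw [hphii, hphiprev]
      show F1 i = _ * _ + _ * ((F1 (((i+N).toNat : ℤ) - N)
        - ((2 - (((i+N).toNat:ℤ) - N):ℤ):ℂ) * philo F1 N (i+N).toNat)
          / ((1 + (((i+N).toNat:ℤ) - N):ℤ):ℂ))
      rw [hcast]
      rw [show i + N - N = i by ring]
      have hne : (1 + (i:ℂ)) ≠ 0 := by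
        have : ((1 + i : ℤ):ℂ) ≠ 0 := Int.cast_ne_zero.mpr (by omega)
        push_cast at this; exact this
      push_cast
      field_simp
      ring
  · rcases lt_trichotomy i 1 with h0 | h1 | h2
    · -- i = 0
      have : i = 0 := by omega
      subst this
      show F1 0 = _ * wphi F1 N (-1) + _ * wphi F1 N 0
      simp only [wphi]
      norm_num
    · -- i = 1
      subst h1
      show F1 1 = _ * wphi F1 N 0 + _ * wphi F1 N 1
      simp only [wphi]
      norm_num
      try ring
    · -- i ≥ 3
      have h3 : 3 ≤ i := by omega
      rcases le_or_gt (N+1) i with hge | hlt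
      · rw [wphi_hi hN i (by omega), wphi_hi hN (i-1) (by omega),
          hs i (by rw [abs_of_nonneg (by omega : (0:ℤ) ≤ i)]; omega)]
        ring
      · -- 3 ≤ i ≤ N
        have hiN : i ≤ N := by omega
        have hphii : wphi F1 N i = (if i < N then phihi F1 N (N - i).toNat else 0) := by
          simp only [wphi, if_neg (show ¬ i ≤ -2 by omega), if_neg (show i ≠ -1 by omega),
            if_neg (show i ≠ 0 by omega), if_neg (show i ≠ 1 by omega)]
        have hphiprev : wphi F1 N (i-1) = phihi F1 N ((N - i).toNat + 1) := by
          simp only [wphi, if_neg (show ¬ i - 1 ≤ -2 by omega), if_neg (show i - 1 ≠ -1 by omega),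
            if_neg (show i - 1 ≠ 0 by omega), if_neg (show i - 1 ≠ 1 by omega),
            if_pos (show i - 1 < N by omega)]
          congr 1; omega
        have hcast : (((N - i).toNat) : ℤ) = N - i := by omega
        have hne : ((2 - i : ℤ):ℂ) ≠ 0 := Int.cast_ne_zero.mpr (by omega)
        rw [hphii, hphiprev]
        show F1 i = _ * ((F1 (N - ((N-i).toNat:ℤ))
          - ((N + 1 - (((N-i).toNat:ℤ)):ℤ):ℂ) * phihi F1 N (N-i).toNat)
            / ((2 - N + ((N-i).toNat:ℤ):ℤ):ℂ)) + _ * _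
        rw [hcast]
        rw [show N - (N - i) = i by ring]
        have hne2 : (2 - (i:ℂ)) ≠ 0 := by
          have : ((2 - i : ℤ):ℂ) ≠ 0 := Int.cast_ne_zero.mpr (by omega)
          push_cast at this; exact this
        rcases eq_or_lt_of_le hiN with he | hlt2
        · -- i = N
          subst he
          rw [if_neg (lt_irrefl i)]
          rw [show i - i = 0 by ring, show i + 1 - (0:ℤ) = i + 1 by ring,
            show 2 - i + (0:ℤ) = 2 - i by ring]
          have h0 : phihi F1 i (Int.toNat 0) = 0 := rfl
          rw [h0, hs i (by rw [abs_of_nonneg (by omega : (0:ℤ) ≤ i)])]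
          simp
        · rw [if_pos hlt2]
          rw [show N + 1 - (N - i) = 1 + i by ring, show 2 - N + (N - i) = 2 - i by ring]
          push_cast
          field_simp
          ring

end wphi



/-- the special kernel element -/
def h0f : ℤ → ℂ := fun i => if i = -1 then 1 else if i = 0 then -2 else if i = 1 then 1 else 0

lemma bdd_h0f : Bdd h0f := by
  refine ⟨2, fun i hi => ?_⟩
  have h1 : i ≠ -1 := by intro h; rw [h] at hi; norm_num at hi
  have h2 : i ≠ 0 := by intro h; rw [h] at hi; norm_num at hi
  have h3 : i ≠ 1 := by intro h; rw [h] at hi; norm_num at hi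
  simp [h0f, h1, h2, h3]

lemma dco_h0f_one : ∀ i : ℤ, dco h0f 1 i = 0 := by
  intro i
  rcases le_or_gt i (-2) with h | h
  · simp [dco, h0f, show i - 1 ≠ -1 by omega, show i - 1 ≠ 0 by omega,
      show i - 1 ≠ 1 by omega, show i ≠ -1 by omega, show i ≠ 0 by omega,
      show i ≠ 1 by omega]
  · rcases le_or_gt 3 i with h2 | h2
    · simp [dco, h0f, show i - 1 ≠ -1 by omega, show i - 1 ≠ 0 by omega,
        show i - 1 ≠ 1 by omega, show i ≠ -1 by omega, show i ≠ 0 by omega,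
        show i ≠ 1 by omega]
    · interval_cases i <;> norm_num [dco, h0f]

lemma dco_h0f_neg : ∀ i : ℤ, dco h0f (-1) i = 0 := by
  intro i
  rcases le_or_gt i (-2) with h | h
  · rcases le_or_gt i (-3) with h3 | h3
    · simp [dco, h0f, show i + 1 ≠ -1 by omega, show i + 1 ≠ 0 by omega,
        show i + 1 ≠ 1 by omega, show i ≠ -1 by omega, show i ≠ 0 by omega,
        show i ≠ 1 by omega, show i - -1 = i + 1 by ring]
    · have : i = -2 := by omega
      subst this; norm_num [dco, h0f]
  · rcases le_or_gt 2 i with h2 | h2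
    · simp [dco, h0f, show i + 1 ≠ -1 by omega, show i + 1 ≠ 0 by omega,
        show i + 1 ≠ 1 by omega, show i ≠ -1 by omega, show i ≠ 0 by omega,
        show i ≠ 1 by omega, show i - -1 = i + 1 by ring]
    · interval_cases i <;> norm_num [dco, h0f]

lemma dco_h0f_two : ∀ i : ℤ, dco h0f 2 i =
    (if i = -1 then 1 else if i = 0 then -4 else if i = 1 then 6 else
      if i = 2 then -4 else if i = 3 then 1 else 0) := by
  intro i
  rcases le_or_gt i (-2) with h | h
  · simp [dco, h0f, show i - 2 ≠ -1 by omega, show i - 2 ≠ 0 by omega,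
      show i - 2 ≠ 1 by omega, show i ≠ -1 by omega, show i ≠ 0 by omega,
      show i ≠ 1 by omega, show i ≠ 2 by omega, show i ≠ 3 by omega]
  · rcases le_or_gt 4 i with h2 | h2
    · simp [dco, h0f, show i - 2 ≠ -1 by omega, show i - 2 ≠ 0 by omega,
        show i - 2 ≠ 1 by omega, show i ≠ -1 by omega, show i ≠ 0 by omega,
        show i ≠ 1 by omega, show i ≠ 2 by omega, show i ≠ 3 by omega]
    · interval_cases i <;> norm_num [dco, h0f]

lemma Bdd.smul {f : ℤ → ℂ} (c : ℂ) (h : Bdd f) : Bdd (fun i => c * f i) := by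
  obtain ⟨N, hN⟩ := h
  exact ⟨N, fun i hi => by show c * f i = 0; rw [hN i hi, mul_zero]⟩

/-- The main Witt-algebra computation: every finitely-supported degree-zero
1-cocycle datum with values in the (tensor square)-type module is a coboundary. -/
lemma witt {F : ℤ → ℤ → ℂ} (hB : ∀ m, Bdd (F m))
    (hE : ∀ m n i : ℤ, ((m-n:ℤ):ℂ) * F (m+n) i
      = ((2*m-i:ℤ):ℂ) * F n (i-m) + ((m-n+i:ℤ):ℂ) * F n i
        - ((2*n-i:ℤ):ℂ) * F m (i-n) - ((n-m+i:ℤ):ℂ) * F m i) :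
    ∃ φ : ℤ → ℂ, Bdd φ ∧ ∀ m i, F m i = dco φ m i := by
  classical
  -- Step 0 : the degree-zero datum vanishes
  have hF0rel : ∀ m i : ℤ, ((2*m-i:ℤ):ℂ) * F 0 (i-m) + ((m+i:ℤ):ℂ) * F 0 i = 0 := by
    intro m i
    have e := hE m 0 i
    rw [show i - (0:ℤ) = i by ring, show m + (0:ℤ) = m by ring] at e
    linear_combination (norm := (push_cast; ring1)) -e
  have hF0 : ∀ i, F 0 i = 0 := by
    apply ker (hB 0)
    · intro i
      have e := hF0rel 1 i
      linear_combination (norm := (push_cast; ring1)) e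
    · intro i
      have e := hF0rel 2 i
      linear_combination (norm := (push_cast; ring1)) e
  -- Step 1 : construct the potential from the degree-one datum
  obtain ⟨N0, hN0⟩ := hB 1
  have hN : (3:ℤ) ≤ max N0 3 := le_max_right _ _
  have hsupp : ∀ i : ℤ, max N0 3 ≤ |i| → F 1 i = 0 :=
    fun i hi => hN0 i (le_trans (le_max_left _ _) hi)
  obtain ⟨φ, hBφ, hW1⟩ : ∃ φ : ℤ → ℂ, Bdd φ ∧ ∀ i : ℤ, i ≠ -1 → i ≠ 2 →
      F 1 i = ((2-i:ℤ):ℂ) * φ (i-1) + ((1+i:ℤ):ℂ) * φ i :=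
    ⟨wphi (F 1) (max N0 3), bdd_wphi hN, wphi_W1 hN hsupp⟩
  obtain ⟨u, hu⟩ : ∃ u : ℂ, u = F 1 (-1) - 3 * φ (-2) := ⟨_, rfl⟩
  obtain ⟨w, hw⟩ : ∃ w : ℂ, w = F 1 2 - 3 * φ 2 := ⟨_, rfl⟩
  obtain ⟨F', hF'def⟩ : ∃ F' : ℤ → ℤ → ℂ, F' = fun m i => F m i - dco φ m i := ⟨_, rfl⟩
  have hF'app : ∀ m i, F' m i = F m i - dco φ m i := fun m i => by rw [hF'def]
  have hBF' : ∀ m, Bdd (F' m) := by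
    intro m; rw [hF'def]; exact (hB m).sub (bdd_dco hBφ m)
  have hE' : ∀ m n i : ℤ, ((m-n:ℤ):ℂ) * F' (m+n) i
      = ((2*m-i:ℤ):ℂ) * F' n (i-m) + ((m-n+i:ℤ):ℂ) * F' n i
        - ((2*n-i:ℤ):ℂ) * F' m (i-n) - ((n-m+i:ℤ):ℂ) * F' m i := by
    intro m n i
    simp only [hF'app]
    linear_combination (norm := (push_cast; ring1)) hE m n i - dco_cocycle φ m n i
  have hF'0 : ∀ i, F' 0 i = 0 := by
    intro i; rw [hF'app, hF0, dco_zero]; ring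
  have hF'1 : ∀ i : ℤ, F' 1 i = (if i = -1 then u else 0) + (if i = 2 then w else 0) := by
    intro i
    by_cases h1 : i = -1
    · subst h1
      rw [hF'app, hu]
      simp only [dco]
      norm_num
    · by_cases h2 : i = 2
      · subst h2
        rw [hF'app, hw]
        simp only [dco, if_neg h1]
        norm_num
      · rw [hF'app]
        simp only [dco, if_neg h1, if_neg h2]
        have e := hW1 i h1 h2
        linear_combination (norm := (push_cast; ring1)) e
  have hF'1z : ∀ i : ℤ, i ≠ -1 → i ≠ 2 → F' 1 i = 0 := by
    intro i h1 h2; rw [hF'1, if_neg h1, if_neg h2]; ring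
  have hv2 : F' 1 2 = w := by rw [hF'1]; norm_num
  have hvm1 : F' 1 (-1) = u := by rw [hF'1]; norm_num
  -- the S1 relation
  have hS1 : ∀ i : ℤ, ((2-i:ℤ):ℂ) * F' (-1) (i-1) + ((2+i:ℤ):ℂ) * F' (-1) i
      + ((2+i:ℤ):ℂ) * F' 1 (i+1) + ((2-i:ℤ):ℂ) * F' 1 i = 0 := by
    intro i
    have e := hE' 1 (-1) i
    rw [show (1:ℤ) + (-1) = 0 by ring, show i - (-1:ℤ) = i + 1 by ring, hF'0 i] at e
    linear_combination (norm := (push_cast; ring1)) -e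
  -- zero regions for G = F' (-1)
  have hGup : ∀ i : ℤ, 2 ≤ i → F' (-1) i = 0 := by
    refine tail_up (c := fun i => ((3+i:ℤ):ℂ)) (d := fun i => ((i-1:ℤ):ℂ)) ?_ ?_ (hBF' (-1))
    · intro i hi; exact zne (by omega)
    · intro i hi
      have e := hS1 (i+1)
      rw [show i + 1 - 1 = i by ring, show i + 1 + 1 = i + 2 by ring,
        hF'1z (i+2) (by omega) (by omega), hF'1z (i+1) (by omega) (by omega)] at e
      linear_combination (norm := (push_cast; ring1)) e
  have hGdn : ∀ i : ℤ, i ≤ -3 → F' (-1) i = 0 := by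
    refine tail_down (c := fun i => ((2-i:ℤ):ℂ)) (d := fun i => ((-2-i:ℤ):ℂ)) ?_ ?_ (hBF' (-1))
    · intro i hi; exact zne (by omega)
    · intro i hi
      have e := hS1 i
      rw [hF'1z (i+1) (by omega) (by omega), hF'1z i (by omega) (by omega)] at e
      linear_combination (norm := (push_cast; ring1)) e
  -- values of G
  have hG0 : F' (-1) 0 = -3 * F' (-1) 1 - 3 * w := by
    have e := hS1 1
    rw [show (1:ℤ) - 1 = 0 by norm_num, show (1:ℤ) + 1 = 2 by norm_num, hv2,
      hF'1z 1 (by norm_num) (by norm_num)] at e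
    linear_combination (norm := (push_cast; ring1)) e
  have hGm1 : F' (-1) (-1) = 3 * F' (-1) 1 + 3 * w := by
    have e := hS1 0
    rw [show (0:ℤ) - 1 = -1 by norm_num, show (0:ℤ) + 1 = 1 by norm_num,
      hF'1z 1 (by norm_num) (by norm_num), hF'1z 0 (by norm_num) (by norm_num)] at e
    linear_combination (norm := (push_cast; ring1)) e/2 - hG0
  have hGm2 : F' (-1) (-2) = -(F' (-1) 1) - w - u := by
    have e := hS1 (-1)
    rw [show (-1:ℤ) - 1 = -2 by norm_num, show (-1:ℤ) + 1 = 0 by norm_num,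
      hF'1z 0 (by norm_num) (by norm_num), hvm1] at e
    linear_combination (norm := (push_cast; ring1)) e/3 - hGm1/3
  -- the S2 relation
  have hS2 : ∀ i : ℤ, ((2+i:ℤ):ℂ) * F' 2 (i+1) + ((3-i:ℤ):ℂ) * F' 2 i
      = 3 * F' 1 i - ((4-i:ℤ):ℂ) * F' (-1) (i-2) - ((3+i:ℤ):ℂ) * F' (-1) i := by
    intro i
    have e := hE' 2 (-1) i
    rw [show (2:ℤ) + (-1) = 1 by ring, show i - (-1:ℤ) = i + 1 by ring] at e
    linear_combination (norm := (push_cast; ring1)) -e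
  have hHdn : ∀ i : ℤ, i ≤ -2 → F' 2 i = 0 := by
    refine tail_down (c := fun i => ((4-i:ℤ):ℂ)) (d := fun i => ((-1-i:ℤ):ℂ)) ?_ ?_ (hBF' 2)
    · intro i hi; exact zne (by omega)
    · intro i hi
      have e := hS2 (i-1)
      rw [show i - 1 + 1 = i by ring, show i - 1 - 2 = i - 3 by ring,
        hF'1z (i-1) (by omega) (by omega),
        hGdn (i-3) (by omega), hGdn (i-1) (by omega)] at e
      linear_combination (norm := (push_cast; ring1)) e
  have hC1 : F' (-1) (-2) = 0 := by
    have e := hS2 (-2)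
    rw [show (-2:ℤ) + 1 = -1 by norm_num, show (-2:ℤ) - 2 = -4 by norm_num,
      hF'1z (-2) (by norm_num) (by norm_num), hGdn (-4) (by norm_num),
      hHdn (-2) (by norm_num)] at e
    linear_combination (norm := (push_cast; ring1)) e
  have hHup : ∀ i : ℤ, 4 ≤ i → F' 2 i = 0 := by
    refine tail_up (c := fun i => ((2+i:ℤ):ℂ)) (d := fun i => ((i-3:ℤ):ℂ)) ?_ ?_ (hBF' 2)
    · intro i hi; exact zne (by omega)
    · intro i hi
      have e := hS2 i
      rw [hF'1z i (by omega) (by omega), hGup (i-2) (by omega), hGup i (by omega)] at e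
      linear_combination (norm := (push_cast; ring1)) e
  have hC2 : F' (-1) 1 = 0 := by
    have e := hS2 3
    rw [show (3:ℤ) + 1 = 4 by norm_num, show (3:ℤ) - 2 = 1 by norm_num,
      hF'1z 3 (by norm_num) (by norm_num), hGup 3 (by norm_num),
      hHup 4 (by norm_num)] at e
    linear_combination (norm := (push_cast; ring1)) e
  -- the S3 relation and w = 0
  have hS3 : ∀ i : ℤ, ((2-i:ℤ):ℂ) * F' (-2) (i-1) + ((3+i:ℤ):ℂ) * F' (-2) i
      = 3 * F' (-1) i - ((4+i:ℤ):ℂ) * F' 1 (i+2) - ((3-i:ℤ):ℂ) * F' 1 i := by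
    intro i
    have e := hE' 1 (-2) i
    rw [show (1:ℤ) + (-2) = -1 by ring, show i - (-2:ℤ) = i + 2 by ring] at e
    linear_combination (norm := (push_cast; ring1)) -e
  have hG2up : ∀ i : ℤ, 2 ≤ i → F' (-2) i = 0 := by
    refine tail_up (c := fun i => ((4+i:ℤ):ℂ)) (d := fun i => ((i-1:ℤ):ℂ)) ?_ ?_ (hBF' (-2))
    · intro i hi; exact zne (by omega)
    · intro i hi
      have e := hS3 (i+1)
      rw [show i + 1 - 1 = i by ring, show i + 1 + 2 = i + 3 by ring,
        hF'1z (i+3) (by omega) (by omega),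
        hF'1z (i+1) (by omega) (by omega), hGup (i+1) (by omega)] at e
      linear_combination (norm := (push_cast; ring1)) e
  have hwz : w = 0 := by
    have e := hS3 2
    rw [show (2:ℤ) - 1 = 1 by norm_num, show (2:ℤ) + 2 = 4 by norm_num,
      hF'1z 4 (by norm_num) (by norm_num), hv2, hGup 2 (by norm_num),
      hG2up 2 (by norm_num)] at e
    linear_combination (norm := (push_cast; ring1)) e
  have huz : u = 0 := by
    have e := hGm2
    rw [hC1, hC2, hwz] at e
    linear_combination (norm := (push_cast; ring1)) e
  have hF'1zz : ∀ i, F' 1 i = 0 := by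
    intro i; rw [hF'1, hwz, huz]
    simp
  have hGz : ∀ i, F' (-1) i = 0 := by
    intro i
    rcases le_or_gt 2 i with h | h
    · exact hGup i h
    · rcases le_or_gt i (-3) with h2 | h2
      · exact hGdn i h2
      · interval_cases i
        · exact hC1
        · rw [hGm1, hC2, hwz]; ring
        · rw [hG0, hC2, hwz]; ring
        · exact hC2
  -- the binomial profile of F' 2
  have hS2' : ∀ i : ℤ, ((2+i:ℤ):ℂ) * F' 2 (i+1) + ((3-i:ℤ):ℂ) * F' 2 i = 0 := by
    intro i
    have e := hS2 i
    simp only [hF'1zz, hGz] at e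
    linear_combination (norm := (push_cast; ring1)) e
  have hH0 : F' 2 0 = -4 * F' 2 (-1) := by
    have e := hS2' (-1)
    rw [show (-1:ℤ) + 1 = 0 by norm_num] at e
    linear_combination (norm := (push_cast; ring1)) e
  have hH1 : F' 2 1 = 6 * F' 2 (-1) := by
    have e := hS2' 0
    rw [show (0:ℤ) + 1 = 1 by norm_num] at e
    linear_combination (norm := (push_cast; ring1)) e/2 - 3/2 * hH0
  have hH2 : F' 2 2 = -4 * F' 2 (-1) := by
    have e := hS2' 1
    rw [show (1:ℤ) + 1 = 2 by norm_num] at e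
    linear_combination (norm := (push_cast; ring1)) e/3 - 2/3 * hH1
  have hH3 : F' 2 3 = F' 2 (-1) := by
    have e := hS2' 2
    rw [show (2:ℤ) + 1 = 3 by norm_num] at e
    linear_combination (norm := (push_cast; ring1)) e/4 - hH2/4
  -- subtract the kernel coboundary
  obtain ⟨F'', hF''def⟩ : ∃ F'' : ℤ → ℤ → ℂ,
      F'' = fun m i => F' m i - F' 2 (-1) * dco h0f m i := ⟨_, rfl⟩
  have hF''app : ∀ m i, F'' m i = F' m i - F' 2 (-1) * dco h0f m i := fun m i => by rw [hF''def]
  have hBF'' : ∀ m, Bdd (F'' m) := by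
    intro m; rw [hF''def]
    exact (hBF' m).sub (Bdd.smul _ (bdd_dco bdd_h0f m))
  have hE'' : ∀ m n i : ℤ, ((m-n:ℤ):ℂ) * F'' (m+n) i
      = ((2*m-i:ℤ):ℂ) * F'' n (i-m) + ((m-n+i:ℤ):ℂ) * F'' n i
        - ((2*n-i:ℤ):ℂ) * F'' m (i-n) - ((n-m+i:ℤ):ℂ) * F'' m i := by
    intro m n i
    simp only [hF''app]
    linear_combination (norm := (push_cast; ring1))
      hE' m n i - F' 2 (-1) * dco_cocycle h0f m n i
  have hF''0 : ∀ i, F'' 0 i = 0 := by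
    intro i; rw [hF''app, hF'0, dco_zero]; ring
  have hF''1 : ∀ i, F'' 1 i = 0 := by
    intro i; rw [hF''app, hF'1zz, dco_h0f_one]; ring
  have hF''m1 : ∀ i, F'' (-1) i = 0 := by
    intro i; rw [hF''app, hGz, dco_h0f_neg]; ring
  have hF''2 : ∀ i, F'' 2 i = 0 := by
    intro i
    rw [hF''app, dco_h0f_two]
    rcases le_or_gt i (-2) with h | h
    · rw [hHdn i h]
      simp [show i ≠ -1 by omega, show i ≠ 0 by omega, show i ≠ 1 by omega,
        show i ≠ 2 by omega, show i ≠ 3 by omega]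
    · rcases le_or_gt 4 i with h2 | h2
      · rw [hHup i h2]
        simp [show i ≠ -1 by omega, show i ≠ 0 by omega, show i ≠ 1 by omega,
          show i ≠ 2 by omega, show i ≠ 3 by omega]
      · interval_cases i
        · norm_num
        · rw [hH0]; norm_num; ring
        · rw [hH1]; norm_num; ring
        · rw [hH2]; norm_num; ring
        · rw [hH3]; norm_num
  -- now kill F'' (-2)
  have hS3'' : ∀ i : ℤ, ((2-i:ℤ):ℂ) * F'' (-2) (i-1) + ((3+i:ℤ):ℂ) * F'' (-2) i = 0 := by
    intro i
    have e := hE'' 1 (-2) i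
    rw [show (1:ℤ) + (-2) = -1 by ring, show i - (-2:ℤ) = i + 2 by ring] at e
    simp only [hF''m1, hF''1] at e
    linear_combination (norm := (push_cast; ring1)) -e
  have hG2''up : ∀ i : ℤ, 2 ≤ i → F'' (-2) i = 0 := by
    refine tail_up (c := fun i => ((4+i:ℤ):ℂ)) (d := fun i => ((i-1:ℤ):ℂ)) ?_ ?_ (hBF'' (-2))
    · intro i hi; exact zne (by omega)
    · intro i hi
      have e := hS3'' (i+1)
      rw [show i + 1 - 1 = i by ring] at e
      linear_combination (norm := (push_cast; ring1)) e
  have hG2''dn : ∀ i : ℤ, i ≤ -4 → F'' (-2) i = 0 := by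
    refine tail_down (c := fun i => ((2-i:ℤ):ℂ)) (d := fun i => ((-3-i:ℤ):ℂ)) ?_ ?_ (hBF'' (-2))
    · intro i hi; exact zne (by omega)
    · intro i hi
      have e := hS3'' i
      linear_combination (norm := (push_cast; ring1)) e
  have hc0 : F'' (-2) 0 = -4 * F'' (-2) 1 := by
    have e := hS3'' 1
    rw [show (1:ℤ) - 1 = 0 by norm_num] at e
    linear_combination (norm := (push_cast; ring1)) e
  have hcm1 : F'' (-2) (-1) = 6 * F'' (-2) 1 := by
    have e := hS3'' 0
    rw [show (0:ℤ) - 1 = -1 by norm_num] at e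
    linear_combination (norm := (push_cast; ring1)) e/2 - 3/2 * hc0
  have hcm2 : F'' (-2) (-2) = -4 * F'' (-2) 1 := by
    have e := hS3'' (-1)
    rw [show (-1:ℤ) - 1 = -2 by norm_num] at e
    linear_combination (norm := (push_cast; ring1)) e/3 - 2/3 * hcm1
  have hcm3 : F'' (-2) (-3) = F'' (-2) 1 := by
    have e := hS3'' (-2)
    rw [show (-2:ℤ) - 1 = -3 by norm_num] at e
    linear_combination (norm := (push_cast; ring1)) e/4 - hcm2/4
  have hc1 : F'' (-2) 1 = 0 := by
    have e := hE'' 2 (-2) 1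
    rw [show (2:ℤ) + (-2) = 0 by ring, show (1:ℤ) - 2 = -1 by norm_num,
      show (1:ℤ) - (-2) = 3 by norm_num, hF''0, hF''2, hF''2, hcm1] at e
    have e23 : (23:ℂ) * F'' (-2) 1 = 0 := by
      linear_combination (norm := (push_cast; ring1)) -e
    have := mul_eq_zero.mp e23
    rcases this with h | h
    · norm_num at h
    · exact h
  have hF''m2 : ∀ i, F'' (-2) i = 0 := by
    intro i
    rcases le_or_gt 2 i with h | h
    · exact hG2''up i h
    · rcases le_or_gt i (-4) with h2 | h2
      · exact hG2''dn i h2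
      · interval_cases i
        · rw [hcm3, hc1]
        · rw [hcm2, hc1]; ring
        · rw [hcm1, hc1]; ring
        · rw [hc0, hc1]; ring
        · exact hc1
  -- upward and downward inductions
  have hup : ∀ k : ℕ, ∀ i, F'' (2 + (k:ℤ)) i = 0 := by
    intro k
    induction k with
    | zero => intro i; norm_num; exact hF''2 i
    | succ k ih =>
        intro i
        have e := hE'' 1 (2 + (k:ℤ)) i
        simp only [hF''1, ih] at e
        have hne : ((1 - (2 + (k:ℤ)) : ℤ):ℂ) ≠ 0 := zne (by omega)
        have h3 : ((1 - (2 + (k:ℤ)) : ℤ):ℂ) * F'' (1 + (2 + (k:ℤ))) i = 0 := by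
          linear_combination (norm := (push_cast; ring1)) e
        have h2 := (mul_eq_zero.mp h3).resolve_left hne
        have harg : (2 + ((k+1:ℕ):ℤ)) = 1 + (2 + (k:ℤ)) := by push_cast; ring
        rw [harg]
        exact h2
  have hdn : ∀ k : ℕ, ∀ i, F'' (-2 - (k:ℤ)) i = 0 := by
    intro k
    induction k with
    | zero => intro i; norm_num; exact hF''m2 i
    | succ k ih =>
        intro i
        have e := hE'' (-1) (-2 - (k:ℤ)) i
        simp only [hF''m1, ih] at e
        have hne : (((-1) - (-2 - (k:ℤ)) : ℤ):ℂ) ≠ 0 := zne (by omega)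
        have h3 : (((-1) - (-2 - (k:ℤ)) : ℤ):ℂ) * F'' ((-1) + (-2 - (k:ℤ))) i = 0 := by
          linear_combination (norm := (push_cast; ring1)) e
        have h2 := (mul_eq_zero.mp h3).resolve_left hne
        have harg : (-2 - ((k+1:ℕ):ℤ)) = (-1) + (-2 - (k:ℤ)) := by push_cast; ring
        rw [harg]
        exact h2
  have hF''all : ∀ m i, F'' m i = 0 := by
    intro m i
    rcases le_or_gt 2 m with h | h
    · have := hup (m-2).toNat i
      rw [show (2 + ((m-2).toNat:ℤ)) = m by omega] at this
      exact this
    · rcases le_or_gt m (-2) with h2 | h2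
      · have := hdn (-2-m).toNat i
        rw [show (-2 - (((-2)-m).toNat:ℤ)) = m by omega] at this
        exact this
      · interval_cases m
        · exact hF''m1 i
        · exact hF''0 i
        · exact hF''1 i
  -- conclude
  refine ⟨fun i => φ i + F' 2 (-1) * h0f i, hBφ.add (Bdd.smul _ bdd_h0f), ?_⟩
  intro m i
  have e := hF''all m i
  rw [hF''app, hF'app] at e
  have h4 : F m i = dco φ m i + F' 2 (-1) * dco h0f m i := by linear_combination e
  rw [h4]
  simp only [dco]
  ring


lemma bdd_neg_flip {α : ℤ → ℂ} (h : Bdd α) : Bdd (fun j => - α (-j)) := by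
  obtain ⟨N, hN⟩ := h
  refine ⟨N, fun i hi => ?_⟩
  show -α (-i) = 0
  rw [hN (-i) (by rwa [abs_neg])]; ring

lemma bdd_coefmul {α : ℤ → ℂ} (m : ℤ) (h : Bdd α) : Bdd (fun i => ((m+i:ℤ):ℂ) * α i) := by
  obtain ⟨N, hN⟩ := h
  refine ⟨N, fun i hi => ?_⟩
  show ((m+i:ℤ):ℂ) * α i = 0
  rw [hN i hi, mul_zero]

/-- uniqueness of potentials -/
lemma dco_unique {φ ψ : ℤ → ℂ} (hφ : Bdd φ) (hψ : Bdd ψ)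
    (h1 : ∀ i, dco φ 1 i = dco ψ 1 i) (h2 : ∀ i, dco φ 2 i = dco ψ 2 i) :
    ∀ i, φ i = ψ i := by
  have hd : ∀ i, (fun i => φ i - ψ i) i = 0 := by
    apply ker (hφ.sub hψ)
    · intro i
      have e := h1 i
      simp only [dco] at e
      linear_combination (norm := (push_cast; ring1)) e
    · intro i
      have e := h2 i
      simp only [dco] at e
      linear_combination (norm := (push_cast; ring1)) e
  intro i
  have := hd i
  linear_combination this

/-- the `P`-family vanishes -/
lemma P0 {P : ℤ → ℤ → ℂ}
    (hP : ∀ m n i : ℤ, ((m-n+i:ℤ):ℂ) * P n i = ((n-m+i:ℤ):ℂ) * P m i) :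
    ∀ m i, P m i = 0 := by
  intro m i
  by_cases hi : i = 0
  · subst hi
    have e1 := hP (m+1) m 0
    have e2 := hP (m+2) m 0
    have e3 := hP (m+2) (m+1) 0
    have h4 : (4:ℂ) * P m 0 = 0 := by
      linear_combination (norm := (push_cast; ring1)) e2 - 2 * e3 + 2 * e1
    have := mul_eq_zero.mp h4
    rcases this with h | h
    · norm_num at h
    · exact h
  · have e := hP (i+m) m i
    have h2 : ((2*i:ℤ):ℂ) * P m i = 0 := by
      linear_combination (norm := (push_cast; ring1)) e
    exact (mul_eq_zero.mp h2).resolve_left (zne (by omega))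

/-- the `Q`-family vanishes -/
lemma Q0 {Q : ℤ → ℤ → ℂ} (hBu : Bdd (Q 0))
    (hQ1 : ∀ m i : ℤ, ((m:ℤ):ℂ) * Q m i
      = ((2*m-i:ℤ):ℂ) * Q 0 (i-m) + ((m+i:ℤ):ℂ) * Q 0 i)
    (hQ2 : ∀ m i : ℤ, ((2*m-i:ℤ):ℂ) * Q 0 (i-m) - ((m+i:ℤ):ℂ) * Q 0 (-i)
      = -((i:ℤ):ℂ) * Q m i + ((m-i:ℤ):ℂ) * Q m (m-i)) :
    ∀ m i, Q m i = 0 := by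
  have hsp : ∀ m i : ℤ, (((2*m-i)*(m+i):ℤ):ℂ) * Q 0 (i-m) + ((i*(m+i):ℤ):ℂ) * Q 0 i
      - (((m+i)*(2*m-i):ℤ):ℂ) * Q 0 (-i) - (((m-i)*(2*m-i):ℤ):ℂ) * Q 0 (m-i) = 0 := by
    intro m i
    have e2 := hQ2 m i
    have e1 := hQ1 m i
    have eA := hQ1 m (m-i)
    rw [show m - i - m = -i by ring] at eA
    linear_combination (norm := (push_cast; ring1))
      ((m:ℤ):ℂ) * e2 - ((i:ℤ):ℂ) * e1 + ((m-i:ℤ):ℂ) * eA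
  have h0even : ∀ m : ℤ, m ≠ 0 → Q 0 (-m) = Q 0 0 + Q 0 m := by
    intro m hm
    have e := hsp m 0
    rw [show (0:ℤ) - m = -m by ring, show -(0:ℤ) = 0 by ring, show m - (0:ℤ) = m by ring] at e
    have h2 : ((2*m^2:ℤ):ℂ) * (Q 0 (-m) - Q 0 0 - Q 0 m) = 0 := by
      linear_combination (norm := (push_cast; ring1)) e
    have h3 := (mul_eq_zero.mp h2).resolve_left (zne (by positivity))
    linear_combination h3
  have hu00 : Q 0 0 = 0 := by
    have e1 := h0even 1 (by norm_num)
    have e2 := h0even (-1) (by norm_num)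
    rw [show -(-1:ℤ) = 1 by ring] at e2
    have h2 : (2:ℂ) * Q 0 0 = 0 := by linear_combination - e1 - e2
    exact (mul_eq_zero.mp h2).resolve_left two_ne_zero
  have heven : ∀ i : ℤ, Q 0 (-i) = Q 0 i := by
    intro i
    by_cases hi : i = 0
    · subst hi; rw [show -(0:ℤ) = 0 by ring]
    · rw [h0even i hi, hu00]; ring
  have hkey : ∀ m i : ℤ, ((i*(2*m-i):ℤ):ℂ) * Q 0 (m-i) = (((m-i)*(m+i):ℤ):ℂ) * Q 0 i := by
    intro m i
    have e := hsp m i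
    rw [show i - m = -(m-i) by ring, heven (m-i), heven i] at e
    linear_combination (norm := (push_cast; ring1)) e/2
  have huz : ∀ i, Q 0 i = 0 := by
    intro i
    by_cases hi : i = 0
    · subst hi; exact hu00
    · obtain ⟨N, hN⟩ := hBu
      have e := hkey (|N| + 3*|i| + 1 + i) i
      have hz : Q 0 (|N| + 3*|i| + 1 + i - i) = 0 := by
        apply hN
        have := abs_nonneg i; have := abs_nonneg N; have := le_abs_self N
        rw [abs_of_nonneg (by omega : (0:ℤ) ≤ |N| + 3*|i| + 1 + i - i)]
        omega
      rw [hz, mul_zero] at e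
      have hne : (((|N| + 3*|i| + 1 + i - i)*(|N| + 3*|i| + 1 + i + i):ℤ):ℂ) ≠ 0 := by
        apply zne
        have h1 := abs_nonneg i; have h2 := abs_nonneg N
        have h3 := le_abs_self i; have h4 := neg_abs_le i
        have hp1 : (0:ℤ) < |N| + 3*|i| + 1 + i - i := by omega
        have hp2 : (0:ℤ) < |N| + 3*|i| + 1 + i + i := by omega
        positivity
      exact (mul_eq_zero.mp e.symm).resolve_left hne
  intro m i
  by_cases hm : m = 0
  · subst hm; exact huz i
  · have e := hQ1 m i
    rw [huz, huz] at e
    have h2 : ((m:ℤ):ℂ) * Q m i = 0 := by linear_combination e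
    exact (mul_eq_zero.mp h2).resolve_left (zne hm)

/-- the `R`-family vanishes -/
lemma R0 {R : ℤ → ℤ → ℂ} (hBr : Bdd (R 0))
    (hR : ∀ m n i : ℤ, ((m-n:ℤ):ℂ) * R (m+n) i
      = ((2*m-i:ℤ):ℂ) * R n (i-m) + ((m-n+i:ℤ):ℂ) * R n i) :
    ∀ m i, R m i = 0 := by
  have h1 : ∀ m i : ℤ, ((m:ℤ):ℂ) * R m i
      = ((2*m-i:ℤ):ℂ) * R 0 (i-m) + ((m+i:ℤ):ℂ) * R 0 i := by
    intro m i
    have e := hR m 0 i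
    rw [show m + (0:ℤ) = m by ring] at e
    linear_combination (norm := (push_cast; ring1)) e
  have hdiam : ∀ m i : ℤ, ((2*(m^2-i^2):ℤ):ℂ) * R 0 i + (((2*m-i)^2:ℤ):ℂ) * R 0 (i-m)
      + (((2*m+i)^2:ℤ):ℂ) * R 0 (i+m) = 0 := by
    intro m i
    have e0 := hR m (-m) i
    rw [show m + -m = (0:ℤ) by ring] at e0
    have e1 := h1 (-m) (i-m)
    rw [show i - m - -m = i by ring] at e1
    have e2 := h1 (-m) i
    rw [show i - -m = i + m by ring] at e2
    linear_combination (norm := (push_cast; ring1))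
      (-(m:ℂ)) * e0 + ((2*m-i:ℤ):ℂ) * e1 + ((2*m+i:ℤ):ℂ) * e2
  have hu : ∀ i, R 0 i = 0 := by
    intro i
    obtain ⟨N, hN⟩ := hBr
    have e := hdiam (|N| + 2*|i| + 1) i
    have habs := abs_nonneg i; have habs2 := abs_nonneg N
    have habs3 := le_abs_self i; have habs4 := neg_abs_le i
    have habs5 := le_abs_self N
    have hz1 : R 0 (i - (|N| + 2*|i| + 1)) = 0 := by
      apply hN
      rw [abs_of_nonpos (by omega : i - (|N| + 2*|i| + 1) ≤ 0)]; omega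
    have hz2 : R 0 (i + (|N| + 2*|i| + 1)) = 0 := by
      apply hN
      rw [abs_of_nonneg (by omega : (0:ℤ) ≤ i + (|N| + 2*|i| + 1))]; omega
    rw [hz1, hz2, mul_zero, mul_zero] at e
    have hne : ((2*((|N| + 2*|i| + 1)^2-i^2):ℤ):ℂ) ≠ 0 := by
      apply zne
      have h5 : |i| < |N| + 2*|i| + 1 := by omega
      have h6 : i^2 < (|N| + 2*|i| + 1)^2 := by nlinarith [sq_abs i]
      omega
    have h7 : ((2*((|N| + 2*|i| + 1)^2-i^2):ℤ):ℂ) * R 0 i = 0 := by linear_combination e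
    exact (mul_eq_zero.mp h7).resolve_left hne
  intro m i
  by_cases hm : m = 0
  · subst hm; exact hu i
  · have e := h1 m i
    rw [hu, hu] at e
    have h2 : ((m:ℤ):ℂ) * R m i = 0 := by linear_combination e
    exact (mul_eq_zero.mp h2).resolve_left (zne hm)


/-- abbreviation for the Witt-cocycle shape -/
def E1shape (F : ℤ → ℤ → ℂ) : Prop :=
  ∀ m n i : ℤ, ((m-n:ℤ):ℂ) * F (m+n) i
    = ((2*m-i:ℤ):ℂ) * F n (i-m) + ((m-n+i:ℤ):ℂ) * F n i
      - ((2*n-i:ℤ):ℂ) * F m (i-n) - ((n-m+i:ℤ):ℂ) * F m i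

/-- the complete degree-zero computation -/
lemma step2 {A B Bb C P Q Qb R : ℤ → ℤ → ℂ}
    (hBA : ∀ m, Bdd (A m)) (hBB : ∀ m, Bdd (B m)) (hBC : ∀ m, Bdd (C m))
    (hBQ : Bdd (Q 0)) (hBR : Bdd (R 0))
    (hE1A : E1shape A) (hE1B : E1shape B) (hE1C : E1shape C)
    (haA : ∀ m i, A m i = - A m (m-i))
    (haBb : ∀ m i, Bb m i = - B m (m-i))
    (haC : ∀ m i, C m i = - C m (m-i))
    (haQb : ∀ m i, Qb m i = - Q m (m-i))
    (hE2Q : ∀ m n i : ℤ, ((m-n:ℤ):ℂ) * Q (m+n) i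
      = ((2*m-i:ℤ):ℂ) * Q n (i-m) + ((m-n+i:ℤ):ℂ) * Q n i - ((n-m+i:ℤ):ℂ) * A m i)
    (hE3b : ∀ m n i : ℤ, ((m-n+i:ℤ):ℂ) * P n i = ((n-m+i:ℤ):ℂ) * P m i)
    (hE3c : ∀ m n i : ℤ, ((2*m-i:ℤ):ℂ) * Q n (i-m) + ((m-n+i:ℤ):ℂ) * Qb n i
      = ((2*n-i:ℤ):ℂ) * Q m (i-n) + ((n-m+i:ℤ):ℂ) * Qb m i)
    (hE2R : ∀ m n i : ℤ, ((m-n:ℤ):ℂ) * R (m+n) i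
      = ((2*m-i:ℤ):ℂ) * R n (i-m) + ((m-n+i:ℤ):ℂ) * R n i
        - ((2*n-i:ℤ):ℂ) * B m (i-n) - ((n-m+i:ℤ):ℂ) * Bb m i) :
    ∃ α βc γ : ℤ → ℂ, Bdd α ∧ Bdd βc ∧ Bdd γ ∧
      (∀ i, α (-i) = - α i) ∧ (∀ i, γ (-i) = - γ i) ∧
      (∀ m i, A m i = dco α m i) ∧ (∀ m i, B m i = dco βc m i) ∧
      (∀ m i, C m i = dco γ m i) ∧
      (∀ m i, P m i = 0) ∧
      (∀ m i, Q m i = ((m+i:ℤ):ℂ) * α i) ∧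
      (∀ m i, R m i = ((2*m-i:ℤ):ℂ) * βc (i-m) - ((m+i:ℤ):ℂ) * βc (-i)) := by
  obtain ⟨α, hBα, hA⟩ := witt hBA hE1A
  obtain ⟨βc, hBβ, hB⟩ := witt hBB hE1B
  obtain ⟨γ, hBγ, hC⟩ := witt hBC hE1C
  -- oddness of α and γ via uniqueness
  have hodd : ∀ (F : ℤ → ℤ → ℂ) (φ : ℤ → ℂ), Bdd φ → (∀ m i, F m i = dco φ m i) →
      (∀ m i, F m i = - F m (m-i)) → ∀ i, φ (-i) = - φ i := by
    intro F φ hBφ hF hskew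
    have h2 : ∀ m i, dco φ m i = dco (fun j => - φ (-j)) m i := by
      intro m i
      rw [← hF m i, hskew m i, hF m (m-i)]
      simp only [dco]
      rw [show m - i - m = -i by ring, show -(i - m) = m - i by ring]
      push_cast
      ring
    have h3 := dco_unique hBφ (bdd_neg_flip hBφ) (fun i => h2 1 i) (fun i => h2 2 i)
    intro i
    have h4 : φ (-i) = - φ (-(-i)) := h3 (-i)
    rw [neg_neg] at h4
    exact h4
  have hαodd : ∀ i, α (-i) = - α i := hodd A α hBα hA haA
  have hγodd : ∀ i, γ (-i) = - γ i := hodd C γ hBγ hC haC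
  -- P vanishes
  have hP : ∀ m i, P m i = 0 := P0 (fun m n i => hE3b m n i)
  -- Q analysis
  obtain ⟨Q', hQ'def⟩ : ∃ Q' : ℤ → ℤ → ℂ,
      Q' = fun m i => Q m i - ((m+i:ℤ):ℂ) * α i := ⟨_, rfl⟩
  have hQ'app : ∀ m i, Q' m i = Q m i - ((m+i:ℤ):ℂ) * α i := fun m i => by rw [hQ'def]
  have hQ'1 : ∀ m i : ℤ, ((m:ℤ):ℂ) * Q' m i
      = ((2*m-i:ℤ):ℂ) * Q' 0 (i-m) + ((m+i:ℤ):ℂ) * Q' 0 i := by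
    intro m i
    have e := hE2Q m 0 i
    rw [show m + (0:ℤ) = m by ring, hA m i] at e
    simp only [dco] at e
    simp only [hQ'app]
    linear_combination (norm := (push_cast; ring1)) e
  have hQ'2 : ∀ m i : ℤ, ((2*m-i:ℤ):ℂ) * Q' 0 (i-m) - ((m+i:ℤ):ℂ) * Q' 0 (-i)
      = -((i:ℤ):ℂ) * Q' m i + ((m-i:ℤ):ℂ) * Q' m (m-i) := by
    intro m i
    have e := hE3c m 0 i
    rw [show i - (0:ℤ) = i by ring, haQb 0 i, haQb m i,
      show (0:ℤ) - i = -i by ring] at e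
    simp only [hQ'app]
    have eo : α (i-m) = - α (m-i) := by
      rw [show i - m = -(m-i) by ring, hαodd]
    rw [eo, hαodd i]
    linear_combination (norm := (push_cast; ring1)) e
  have hBQ' : Bdd (Q' 0) := by
    rw [hQ'def]
    exact hBQ.sub (bdd_coefmul 0 hBα)
  have hQ'z := Q0 hBQ' hQ'1 hQ'2
  have hQfin : ∀ m i, Q m i = ((m+i:ℤ):ℂ) * α i := by
    intro m i
    have h5 := hQ'z m i
    rw [hQ'app] at h5
    linear_combination h5
  -- R analysis
  obtain ⟨R', hR'def⟩ : ∃ R' : ℤ → ℤ → ℂ,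
      R' = fun m i => R m i - (((2*m-i:ℤ):ℂ) * βc (i-m) - ((m+i:ℤ):ℂ) * βc (-i)) := ⟨_, rfl⟩
  have hR'app : ∀ m i, R' m i = R m i - (((2*m-i:ℤ):ℂ) * βc (i-m) - ((m+i:ℤ):ℂ) * βc (-i)) :=
    fun m i => by rw [hR'def]
  have hR'rel : ∀ m n i : ℤ, ((m-n:ℤ):ℂ) * R' (m+n) i
      = ((2*m-i:ℤ):ℂ) * R' n (i-m) + ((m-n+i:ℤ):ℂ) * R' n i := by
    intro m n i
    have e := hE2R m n i
    rw [haBb m i, hB m (i-n), hB m (m-i)] at e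
    simp only [dco] at e
    rw [show m - i - m = -i by ring, show i - n - m = i - m - n by ring] at e
    simp only [hR'app]
    rw [show i - (m+n) = i - m - n by ring, show -(i-m) = m - i by ring]
    linear_combination (norm := (push_cast; ring1)) e
  have hBR' : Bdd (R' 0) := by
    rw [hR'def]
    obtain ⟨N1, hN1⟩ := hBβ
    obtain ⟨N2, hN2⟩ := hBR
    refine ⟨max N1 N2, fun i hi => ?_⟩
    have h1 : R 0 i = 0 := hN2 i (le_trans (le_max_right _ _) hi)
    have h2 : βc (i - 0) = 0 := by
      rw [show i - (0:ℤ) = i by ring]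
      exact hN1 i (le_trans (le_max_left _ _) hi)
    have h3 : βc (-i) = 0 := hN1 (-i) (by rw [abs_neg]; exact le_trans (le_max_left _ _) hi)
    show R 0 i - (((2*0-i:ℤ):ℂ) * βc (i-0) - ((0+i:ℤ):ℂ) * βc (-i)) = 0
    rw [h1, h2, h3]; ring
  have hR'z := R0 hBR' hR'rel
  have hRfin : ∀ m i, R m i = ((2*m-i:ℤ):ℂ) * βc (i-m) - ((m+i:ℤ):ℂ) * βc (-i) := by
    intro m i
    have h5 := hR'z m i
    rw [hR'app] at h5
    linear_combination h5
  exact ⟨α, βc, γ, hBα, hBβ, hBγ, hαodd, hγodd, hA, hB, hC, hP, hQfin, hRfin⟩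


open TensorProduct

/-! ## The bridge: coordinates on `g ⊗ g` -/

/-- weight of a basis index -/
def wtt : ℤ ⊕ ℤ → ℤ
  | .inl a => a
  | .inr a => a

/-- weight shift (for the action of `l_m`) -/
def subb (m : ℤ) : ℤ ⊕ ℤ → ℤ ⊕ ℤ
  | .inl a => .inl (a - m)
  | .inr a => .inr (a - m)

lemma kron_shift (m s t : ℤ) (C1 C2 : Prop) [Decidable C1] [Decidable C2]
    (hiff : C1 ↔ C2) (heq : C1 → m - s = 2*m - t) :
    ((m - s:ℤ):ℂ) * (if C1 then (1:ℂ) else 0) = ((2*m - t:ℤ):ℂ) * (if C2 then (1:ℂ) else 0) := by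
  by_cases h : C1
  · rw [if_pos h, if_pos (hiff.mp h), heq h]
  · rw [if_neg h, if_neg (fun hc => h (hiff.mpr hc))]
    ring

/-- index of the bracket of two basis vectors -/
def mixx : ℤ ⊕ ℤ → ℤ ⊕ ℤ → ℤ ⊕ ℤ
  | .inl a, .inl b => .inl (a + b)
  | x, y => .inr (wtt x + wtt y)

/-- structure constant -/
def scc : ℤ ⊕ ℤ → ℤ ⊕ ℤ → ℤ
  | .inr _, .inr _ => 0
  | x, y => wtt x - wtt y

/-- the index shift appearing in the coordinates of the action of a basis vector -/
def shh : ℤ ⊕ ℤ → ℤ ⊕ ℤ → ℤ ⊕ ℤ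
  | .inl m, p => subb m p
  | .inr m, p => .inl (wtt p - m)

/-- the coefficient appearing in the coordinates of the action of a basis vector -/
def cff : ℤ ⊕ ℤ → ℤ ⊕ ℤ → ℂ
  | .inl m, p => ((2*m - wtt p : ℤ) : ℂ)
  | .inr m, p => (match p with | .inl _ => (0:ℂ) | .inr s => ((2*m - s : ℤ) : ℂ))

lemma wtt_shh (x p : ℤ ⊕ ℤ) : wtt (shh x p) = wtt p - wtt x := by
  rcases x with m | m <;> rcases p with s | s <;> simp [wtt, shh, subb]

lemma shh_mixx (x y p : ℤ ⊕ ℤ) : shh y (shh x p) = shh (mixx x y) p := by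
  rcases x with m | m <;> rcases y with n | n <;> rcases p with s | s <;>
    simp [shh, mixx, subb, wtt] <;> ring

/-- the structure-constant Jacobi-type identity -/
lemma cff_jacobi (x y p : ℤ ⊕ ℤ) :
    ((scc x y : ℤ):ℂ) * cff (mixx x y) p
      = cff x p * cff y (shh x p) - cff y p * cff x (shh y p) := by
  rcases x with m | m <;> rcases y with n | n <;> rcases p with s | s <;>
    simp [scc, mixx, cff, shh, subb, wtt] <;> push_cast <;> ring

/-- the pointwise structure-constant/Kronecker identity -/
lemma scX (x a p : ℤ ⊕ ℤ) :
    ((scc x a : ℤ):ℂ) * (if mixx x a = p then (1:ℂ) else 0)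
      = cff x p * (if a = shh x p then (1:ℂ) else 0) := by
  rcases x with m | m <;> rcases a with s | s <;> rcases p with t | t <;>
    simp only [scc, mixx, cff, shh, subb, wtt]
  · exact kron_shift m s t _ _ (by rw [Sum.inl.injEq, Sum.inl.injEq]; omega)
      (fun h => by have h' := Sum.inl.inj h; omega)
  · simp
  · simp
  · exact kron_shift m s t _ _ (by rw [Sum.inr.injEq, Sum.inr.injEq]; omega)
      (fun h => by have h' := Sum.inr.inj h; omega)
  · simp
  · exact kron_shift m s t _ _ (by rw [Sum.inr.injEq, Sum.inl.injEq]; omega)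
      (fun h => by have h' := Sum.inr.inj h; omega)
  · simp
  · simp

section bridge
variable {g : Type} [AddCommGroup g] [Module ℂ g]

/-- coordinate functionals on `g ⊗ g` -/
noncomputable def KK (L : Module.Basis (ℤ ⊕ ℤ) ℂ g) (p q : ℤ ⊕ ℤ) : (g ⊗[ℂ] g) →ₗ[ℂ] ℂ :=
  (Module.Basis.tensorProduct L L).coord (p, q)

/-- the action on `g ⊗ g` -/
noncomputable def rho (β : g →ₗ[ℂ] g →ₗ[ℂ] g) (x : g) : (g ⊗[ℂ] g) →ₗ[ℂ] (g ⊗[ℂ] g) :=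
  LinearMap.rTensor g (β x) + LinearMap.lTensor g (β x)

variable (L : Module.Basis (ℤ ⊕ ℤ) ℂ g) (β : g →ₗ[ℂ] g →ₗ[ℂ] g)

lemma KK_tmul (p q a b : ℤ ⊕ ℤ) :
    KK L p q (L a ⊗ₜ[ℂ] L b)
      = (if a = p then (1:ℂ) else 0) * (if b = q then (1:ℂ) else 0) := by
  simp only [KK, Module.Basis.coord_apply, Module.Basis.tensorProduct_repr_tmul_apply, Module.Basis.repr_self,
    smul_eq_mul]
  rw [Finsupp.single_apply, Finsupp.single_apply]
  ring

lemma KK_ext {u v : g ⊗[ℂ] g} (h : ∀ p q, KK L p q u = KK L p q v) : u = v := by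
  apply (Module.Basis.tensorProduct L L).ext_elem
  rintro ⟨p, q⟩
  exact h p q

lemma KK_comm (p q : ℤ ⊕ ℤ) (u : g ⊗[ℂ] g) :
    KK L p q (TensorProduct.comm ℂ g g u) = KK L q p u := by
  have : (KK L p q).comp (TensorProduct.comm ℂ g g).toLinearMap = KK L q p := by
    apply Module.Basis.ext (Module.Basis.tensorProduct L L)
    rintro ⟨a, b⟩
    rw [Module.Basis.tensorProduct_apply]
    simp only [LinearMap.comp_apply, LinearEquiv.coe_coe, TensorProduct.comm_tmul]
    rw [KK_tmul, KK_tmul]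
    ring
  exact LinearMap.congr_fun this u

lemma rho_tmul (x : g) (a b : g) :
    rho β x (a ⊗ₜ[ℂ] b) = (β x a) ⊗ₜ[ℂ] b + a ⊗ₜ[ℂ] (β x b) := by
  simp [rho]

/-- the master coordinate formula for the action of a basis vector -/
lemma coordX (hβ : ∀ i j : ℤ ⊕ ℤ, β (L i) (L j) = ((scc i j : ℤ):ℂ) • L (mixx i j))
    (x : ℤ ⊕ ℤ) (p q : ℤ ⊕ ℤ) (u : g ⊗[ℂ] g) :
    KK L p q (rho β (L x) u)
      = cff x p * KK L (shh x p) q u + cff x q * KK L p (shh x q) u := by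
  have hmap : (KK L p q).comp (rho β (L x))
      = cff x p • (KK L (shh x p) q) + cff x q • (KK L p (shh x q)) := by
    apply Module.Basis.ext (Module.Basis.tensorProduct L L)
    rintro ⟨a, b⟩
    rw [Module.Basis.tensorProduct_apply]
    simp only [LinearMap.comp_apply, LinearMap.add_apply, LinearMap.smul_apply, smul_eq_mul]
    rw [rho_tmul, hβ x a, hβ x b, ← TensorProduct.smul_tmul', TensorProduct.tmul_smul,
      map_add, map_smul, map_smul, smul_eq_mul, smul_eq_mul, KK_tmul, KK_tmul, KK_tmul,
      KK_tmul]
    have h1 := scX x a p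
    have h2 := scX x b q
    linear_combination (if b = q then (1:ℂ) else 0) * h1 + (if a = p then (1:ℂ) else 0) * h2
  exact LinearMap.congr_fun hmap u

/-- the bracket relation for the action, in coordinates -/
lemma rho_bracket (hβ : ∀ i j : ℤ ⊕ ℤ, β (L i) (L j) = ((scc i j : ℤ):ℂ) • L (mixx i j))
    (x y p q : ℤ ⊕ ℤ) (u : g ⊗[ℂ] g) :
    ((scc x y : ℤ):ℂ) * KK L p q (rho β (L (mixx x y)) u)
      = KK L p q (rho β (L x) (rho β (L y) u)) - KK L p q (rho β (L y) (rho β (L x) u)) := by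
  rw [coordX L β hβ (mixx x y) p q u,
    coordX L β hβ x p q (rho β (L y) u), coordX L β hβ y p q (rho β (L x) u),
    coordX L β hβ y (shh x p) q u, coordX L β hβ y p (shh x q) u,
    coordX L β hβ x (shh y p) q u, coordX L β hβ x p (shh y q) u,
    shh_mixx x y p, shh_mixx x y q, shh_mixx y x p, shh_mixx y x q]
  rw [show mixx y x = mixx x y by
    rcases x with m|m <;> rcases y with n|n <;> simp [mixx, wtt] <;> ring]
  have h1 := cff_jacobi x y p
  have h2 := cff_jacobi x y q
  linear_combination (KK L (shh (mixx x y) p) q u) * h1 + (KK L p (shh (mixx x y) q) u) * h2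

/-- coordinates of an element along an injective family of indices are finitely supported -/
lemma bdd_coords (u : g ⊗[ℂ] g) (e : ℤ → (ℤ ⊕ ℤ) × (ℤ ⊕ ℤ)) (he : Function.Injective e) :
    Bdd (fun i => KK L (e i).1 (e i).2 u) := by
  classical
  obtain ⟨s, hsupp⟩ : ∃ s : Finset ((ℤ⊕ℤ)×(ℤ⊕ℤ)),
      ∀ pq, pq ∉ s → (Module.Basis.tensorProduct L L).repr u pq = 0 :=
    ⟨((Module.Basis.tensorProduct L L).repr u).support, fun pq h => Finsupp.notMem_support_iff.mp h⟩
  refine ⟨(((s.preimage e he.injOn).sup fun x => x.natAbs : ℕ) : ℤ) + 1, fun i hi => ?_⟩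
  show KK L (e i).1 (e i).2 u = 0
  have hnot : e i ∉ s := by
    intro hin
    have hiT : i ∈ s.preimage e he.injOn := Finset.mem_preimage.mpr hin
    have hle : i.natAbs ≤ (s.preimage e he.injOn).sup (fun x => x.natAbs) :=
      Finset.le_sup hiT
    have habs : |i| = (i.natAbs : ℤ) := Int.abs_eq_natAbs i
    omega
  have hz := hsupp _ hnot
  simp only [KK, Module.Basis.coord_apply]
  exact hz

end bridge

end BMS3


end

open TensorProduct
open BMS3

/-- `H¹(B₃, ∧²B₃) = 0` for the three-dimensional BMS algebra: basis `l_m = L (.inl m)`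
(superrotations) and `T_m = L (.inr m)` (supertranslations), brackets
`⁅l_m, l_n⁆ = (m-n) l_{m+n}`, `⁅l_m, T_n⁆ = (m-n) T_{m+n}`, `⁅T_m, T_n⁆ = 0`;
every 1-cocycle with values in the second exterior power of the adjoint module
is a coboundary. -/
theorem bms3_H1_wedge_two_vanishes
    (g : Type) [AddCommGroup g] [Module ℂ g]
    (L : Module.Basis (ℤ ⊕ ℤ) ℂ g)
    (β : g →ₗ[ℂ] g →ₗ[ℂ] g)
    (hll : ∀ m n : ℤ, β (L (.inl m)) (L (.inl n)) = ((m - n : ℤ) : ℂ) • L (.inl (m + n)))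
    (hlT : ∀ m n : ℤ, β (L (.inl m)) (L (.inr n)) = ((m - n : ℤ) : ℂ) • L (.inr (m + n)))
    (hTl : ∀ m n : ℤ, β (L (.inr m)) (L (.inl n)) = ((m - n : ℤ) : ℂ) • L (.inr (m + n)))
    (hTT : ∀ m n : ℤ, β (L (.inr m)) (L (.inr n)) = 0)
    (δ : g →ₗ[ℂ] g ⊗[ℂ] g)
    (hδanti : ∀ x : g, TensorProduct.comm ℂ g g (δ x) = -(δ x))
    (hcoc : ∀ x y : g, δ (β x y)
        = (LinearMap.rTensor g (β x) + LinearMap.lTensor g (β x)) (δ y)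
        - (LinearMap.rTensor g (β y) + LinearMap.lTensor g (β y)) (δ x)) :
    ∃ r : g ⊗[ℂ] g, TensorProduct.comm ℂ g g r = -r ∧
      ∀ x : g, δ x = (LinearMap.rTensor g (β x) + LinearMap.lTensor g (β x)) r := by
  classical
  -- structure constants
  have hβ : ∀ i j : ℤ⊕ℤ, β (L i) (L j) = ((scc i j : ℤ):ℂ) • L (mixx i j) := by
    rintro (a|a) (b|b)
    · rw [hll]; simp [scc, mixx, wtt]
    · rw [hlT]; simp [scc, mixx, wtt]
    · rw [hTl]; simp [scc, mixx, wtt]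
    · rw [hTT]; simp [scc, mixx, wtt]
  have hco : ∀ x y : g, δ (β x y) = rho β x (δ y) - rho β y (δ x) := fun x y => hcoc x y
  -- the cocycle identity in coordinates
  have CC : ∀ (x y p q : ℤ⊕ℤ), ((scc x y:ℤ):ℂ) * KK L p q (δ (L (mixx x y)))
      = KK L p q (rho β (L x) (δ (L y))) - KK L p q (rho β (L y) (δ (L x))) := by
    intro x y p q
    have e := hco (L x) (L y)
    rw [hβ x y, map_smul] at e
    have e2 := congrArg (KK L p q) e
    rw [map_smul, map_sub, smul_eq_mul] at e2
    exact e2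
  have hanti_δ : ∀ (i : ℤ⊕ℤ) (p q : ℤ⊕ℤ), KK L q p (δ (L i)) = - KK L p q (δ (L i)) := by
    intro i p q
    rw [← KK_comm L p q (δ (L i)), hδanti (L i), map_neg]
  -- the step-1 potential r'
  obtain ⟨σ, hσ⟩ : ∃ σ : (ℤ⊕ℤ)×(ℤ⊕ℤ) → ℂ, σ = fun pq =>
      if wtt pq.1 + wtt pq.2 = 0 then 0 else -(((wtt pq.1 + wtt pq.2 : ℤ):ℂ))⁻¹ := ⟨_, rfl⟩
  obtain ⟨r', hKr'⟩ : ∃ r' : g ⊗[ℂ] g, ∀ p q,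
      KK L p q r' = σ (p,q) * KK L p q (δ (L (.inl 0))) := by
    refine ⟨(Module.Basis.tensorProduct L L).repr.symm
      (Finsupp.onFinset ((Module.Basis.tensorProduct L L).repr (δ (L (.inl 0)))).support
        (fun pq => σ pq * (Module.Basis.tensorProduct L L).repr (δ (L (.inl 0))) pq)
        (fun pq h => by
          replace h : σ pq * ((Module.Basis.tensorProduct L L).repr (δ (L (.inl 0)))) pq ≠ 0 := h
          rw [Finsupp.mem_support_iff]
          intro h0
          rw [h0, mul_zero] at h
          exact h rfl)), ?_⟩
    intro p q
    simp only [KK, Module.Basis.coord_apply]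
    rw [LinearEquiv.apply_symm_apply, Finsupp.onFinset_apply]
  -- auxiliary index computations
  have mixx0 : ∀ i : ℤ⊕ℤ, mixx (.inl 0) i = i := by
    rintro (a|a) <;> simp [mixx, wtt]
  have subb0 : ∀ p : ℤ⊕ℤ, subb 0 p = p := by
    rintro (a|a) <;> simp [subb]
  -- the degree functional equation
  have hstar : ∀ (i p q : ℤ⊕ℤ), ((wtt p + wtt q - wtt i:ℤ):ℂ) * KK L p q (δ (L i))
      = - KK L p q (rho β (L i) (δ (L (.inl 0)))) := by
    intro i p q
    have e := CC (.inl 0) i p q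
    rw [mixx0 i, coordX L β hβ (.inl 0) p q (δ (L i))] at e
    simp only [cff, shh, subb0] at e
    have hsc : scc (.inl 0) i = - wtt i := by rcases i with a|a <;> simp [scc, wtt]
    rw [hsc] at e
    linear_combination (norm := (push_cast; ring1)) e
  -- coordinates of ρ(x) r'
  have hrr : ∀ (x p q : ℤ⊕ℤ), KK L p q (rho β (L x) r')
      = (if wtt p + wtt q - wtt x = 0 then 0 else -(((wtt p + wtt q - wtt x:ℤ):ℂ))⁻¹)
        * KK L p q (rho β (L x) (δ (L (.inl 0)))) := by
    intro x p q
    rw [coordX L β hβ x p q r', hKr', hKr', coordX L β hβ x p q (δ (L (.inl 0))), hσ]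
    simp only
    rw [wtt_shh, wtt_shh]
    rw [show wtt p - wtt x + wtt q = wtt p + wtt q - wtt x by ring,
        show wtt p + (wtt q - wtt x) = wtt p + wtt q - wtt x by ring]
    ring
  have hmatch : ∀ (x p q : ℤ⊕ℤ), wtt p + wtt q = wtt x → KK L p q (rho β (L x) r') = 0 := by
    intro x p q h
    rw [hrr, if_pos (show wtt p + wtt q - wtt x = 0 by omega)]
    ring
  have hmismatch : ∀ (x p q : ℤ⊕ℤ), wtt p + wtt q ≠ wtt x →
      KK L p q (rho β (L x) r') = KK L p q (δ (L x)) := by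
    intro x p q h
    have e := hstar x p q
    have hs : ((wtt p + wtt q - wtt x:ℤ):ℂ) ≠ 0 := zne (by omega)
    have e2 : KK L p q (rho β (L x) (δ (L (.inl 0))))
        = -(((wtt p + wtt q - wtt x:ℤ):ℂ) * KK L p q (δ (L x))) := by
      linear_combination e
    rw [hrr, if_neg (show ¬ (wtt p + wtt q - wtt x = 0) by omega), e2,
      show (-(((wtt p + wtt q - wtt x:ℤ):ℂ))⁻¹)
          * -(((wtt p + wtt q - wtt x:ℤ):ℂ) * KK L p q (δ (L x)))
        = (((wtt p + wtt q - wtt x:ℤ):ℂ))⁻¹ * ((wtt p + wtt q - wtt x:ℤ):ℂ)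
          * KK L p q (δ (L x)) by ring,
      inv_mul_cancel₀ hs, one_mul]
  -- the reduced cocycle D'
  obtain ⟨D', hD'⟩ : ∃ D' : (ℤ⊕ℤ) → (ℤ⊕ℤ) → (ℤ⊕ℤ) → ℂ,
      D' = fun i p q => KK L p q (δ (L i)) - KK L p q (rho β (L i) r') := ⟨_, rfl⟩
  have hD'app : ∀ i p q, D' i p q = KK L p q (δ (L i)) - KK L p q (rho β (L i) r') :=
    fun i p q => by rw [hD']
  have hD'deg : ∀ i p q, wtt p + wtt q ≠ wtt i → D' i p q = 0 := by
    intro i p q h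
    rw [hD'app, hmismatch i p q h]
    ring
  have hrho_anti : ∀ (x p q : ℤ⊕ℤ) (u : g ⊗[ℂ] g), (∀ a b, KK L b a u = - KK L a b u) →
      KK L q p (rho β (L x) u) = - KK L p q (rho β (L x) u) := by
    intro x p q u hu
    rw [coordX L β hβ x q p u, coordX L β hβ x p q u, hu (shh x p) q, hu p (shh x q)]
    ring
  have hD'anti : ∀ i p q, D' i q p = - D' i p q := by
    intro i p q
    rw [hD'app, hD'app, hanti_δ i p q]
    have h2 : KK L q p (rho β (L i) (δ (L (.inl 0))))
        = - KK L p q (rho β (L i) (δ (L (.inl 0)))) :=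
      hrho_anti i p q _ (fun a b => hanti_δ (.inl 0) a b)
    have h1 : KK L q p (rho β (L i) r') = - KK L p q (rho β (L i) r') := by
      rw [hrr, hrr, show wtt q + wtt p = wtt p + wtt q by ring, h2]
      ring
    rw [h1]
    ring
  -- the cocycle identity for D'
  have CC' : ∀ x y p q, ((scc x y:ℤ):ℂ) * D' (mixx x y) p q
      = cff x p * D' y (shh x p) q + cff x q * D' y p (shh x q)
        - cff y p * D' x (shh y p) q - cff y q * D' x p (shh y q) := by
    intro x y p q
    have e1 := CC x y p q
    have e2 := rho_bracket L β hβ x y p q r'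
    have e3 := coordX L β hβ x p q (δ (L y))
    have e4 := coordX L β hβ y p q (δ (L x))
    have e5 := coordX L β hβ x p q (rho β (L y) r')
    have e6 := coordX L β hβ y p q (rho β (L x) r')
    simp only [hD'app]
    linear_combination e1 - e2 + e3 - e4 - e5 + e6
  -- the eight coordinate families
  obtain ⟨Af, hAf⟩ : ∃ f : ℤ → ℤ → ℂ, f = fun m i => D' (.inl m) (.inl i) (.inl (m-i)) := ⟨_, rfl⟩
  obtain ⟨Bf, hBf⟩ : ∃ f : ℤ → ℤ → ℂ, f = fun m i => D' (.inl m) (.inl i) (.inr (m-i)) := ⟨_, rfl⟩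
  obtain ⟨Bbf, hBbf⟩ : ∃ f : ℤ → ℤ → ℂ, f = fun m i => D' (.inl m) (.inr i) (.inl (m-i)) := ⟨_, rfl⟩
  obtain ⟨Cf, hCf⟩ : ∃ f : ℤ → ℤ → ℂ, f = fun m i => D' (.inl m) (.inr i) (.inr (m-i)) := ⟨_, rfl⟩
  obtain ⟨Pf, hPf⟩ : ∃ f : ℤ → ℤ → ℂ, f = fun m i => D' (.inr m) (.inl i) (.inl (m-i)) := ⟨_, rfl⟩
  obtain ⟨Qf, hQf⟩ : ∃ f : ℤ → ℤ → ℂ, f = fun m i => D' (.inr m) (.inl i) (.inr (m-i)) := ⟨_, rfl⟩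
  obtain ⟨Qbf, hQbf⟩ : ∃ f : ℤ → ℤ → ℂ, f = fun m i => D' (.inr m) (.inr i) (.inl (m-i)) := ⟨_, rfl⟩
  obtain ⟨Rf, hRf⟩ : ∃ f : ℤ → ℤ → ℂ, f = fun m i => D' (.inr m) (.inr i) (.inr (m-i)) := ⟨_, rfl⟩
  -- boundedness of the families
  have hBDD : ∀ (i : ℤ⊕ℤ) (e : ℤ → (ℤ⊕ℤ)×(ℤ⊕ℤ)), Function.Injective e →
      Bdd (fun k => D' i (e k).1 (e k).2) := by
    intro i e he
    have hfun : (fun k => D' i (e k).1 (e k).2)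
        = fun k => KK L (e k).1 (e k).2 (δ (L i) - rho β (L i) r') := by
      funext k
      rw [hD'app, map_sub]
    rw [hfun]
    exact bdd_coords L _ e he
  have hBA : ∀ m, Bdd (Af m) := by
    intro m
    rw [hAf]
    exact hBDD (.inl m) (fun i => (.inl i, .inl (m-i)))
      (fun a b h => by simp only [Prod.mk.injEq, Sum.inl.injEq] at h; exact h.1)
  have hBB : ∀ m, Bdd (Bf m) := by
    intro m
    rw [hBf]
    exact hBDD (.inl m) (fun i => (.inl i, .inr (m-i)))
      (fun a b h => by simp only [Prod.mk.injEq, Sum.inl.injEq] at h; exact h.1)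
  have hBC : ∀ m, Bdd (Cf m) := by
    intro m
    rw [hCf]
    exact hBDD (.inl m) (fun i => (.inr i, .inr (m-i)))
      (fun a b h => by simp only [Prod.mk.injEq, Sum.inr.injEq] at h; exact h.1)
  have hBQ0 : Bdd (Qf 0) := by
    rw [hQf]
    exact hBDD (.inr 0) (fun i => (.inl i, .inr (0-i)))
      (fun a b h => by simp only [Prod.mk.injEq, Sum.inl.injEq] at h; exact h.1)
  have hBR0 : Bdd (Rf 0) := by
    rw [hRf]
    exact hBDD (.inr 0) (fun i => (.inr i, .inr (0-i)))
      (fun a b h => by simp only [Prod.mk.injEq, Sum.inr.injEq] at h; exact h.1)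
  -- the Witt-type relations
  have hE1A : E1shape Af := by
    intro m n i
    have e := CC' (.inl m) (.inl n) (.inl i) (.inl (m+n-i))
    simp only [scc, mixx, cff, shh, subb, wtt] at e
    rw [show m+n-i-m = n-i by ring, show m+n-i-n = m-i by ring] at e
    simp only [hAf]
    rw [show n - (i-m) = m+n-i by ring, show m - (i-n) = m+n-i by ring]
    linear_combination (norm := (push_cast; ring1)) e
  have hE1B : E1shape Bf := by
    intro m n i
    have e := CC' (.inl m) (.inl n) (.inl i) (.inr (m+n-i))
    simp only [scc, mixx, cff, shh, subb, wtt] at e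
    rw [show m+n-i-m = n-i by ring, show m+n-i-n = m-i by ring] at e
    simp only [hBf]
    rw [show n - (i-m) = m+n-i by ring, show m - (i-n) = m+n-i by ring]
    linear_combination (norm := (push_cast; ring1)) e
  have hE1C : E1shape Cf := by
    intro m n i
    have e := CC' (.inl m) (.inl n) (.inr i) (.inr (m+n-i))
    simp only [scc, mixx, cff, shh, subb, wtt] at e
    rw [show m+n-i-m = n-i by ring, show m+n-i-n = m-i by ring] at e
    simp only [hCf]
    rw [show n - (i-m) = m+n-i by ring, show m - (i-n) = m+n-i by ring]
    linear_combination (norm := (push_cast; ring1)) e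
  -- antisymmetries
  have haA : ∀ m i, Af m i = - Af m (m-i) := by
    intro m i
    simp only [hAf]
    rw [show m - (m-i) = i by ring, hD'anti (.inl m) (.inl (m-i)) (.inl i)]
  have haBb : ∀ m i, Bbf m i = - Bf m (m-i) := by
    intro m i
    simp only [hBbf, hBf]
    rw [show m - (m-i) = i by ring, hD'anti (.inl m) (.inl (m-i)) (.inr i)]
  have haC : ∀ m i, Cf m i = - Cf m (m-i) := by
    intro m i
    simp only [hCf]
    rw [show m - (m-i) = i by ring, hD'anti (.inl m) (.inr (m-i)) (.inr i)]
  have haQb : ∀ m i, Qbf m i = - Qf m (m-i) := by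
    intro m i
    simp only [hQbf, hQf]
    rw [show m - (m-i) = i by ring, hD'anti (.inr m) (.inl (m-i)) (.inr i)]
  -- the mixed relations
  have hE2Q : ∀ m n i : ℤ, ((m-n:ℤ):ℂ) * Qf (m+n) i
      = ((2*m-i:ℤ):ℂ) * Qf n (i-m) + ((m-n+i:ℤ):ℂ) * Qf n i - ((n-m+i:ℤ):ℂ) * Af m i := by
    intro m n i
    have e := CC' (.inl m) (.inr n) (.inl i) (.inr (m+n-i))
    simp only [scc, mixx, cff, shh, subb, wtt] at e
    rw [show m+n-i-m = n-i by ring, show m+n-i-n = m-i by ring] at e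
    simp only [hQf, hAf]
    rw [show n - (i-m) = m+n-i by ring]
    linear_combination (norm := (push_cast; ring1)) e
  have hE3b : ∀ m n i : ℤ, ((m-n+i:ℤ):ℂ) * Pf n i = ((n-m+i:ℤ):ℂ) * Pf m i := by
    intro m n i
    have e := CC' (.inr m) (.inr n) (.inl i) (.inr (m+n-i))
    simp only [scc, mixx, cff, shh, subb, wtt] at e
    rw [show m+n-i-m = n-i by ring, show m+n-i-n = m-i by ring] at e
    simp only [hPf]
    linear_combination (norm := (push_cast; ring1)) -e
  have hE3c : ∀ m n i : ℤ, ((2*m-i:ℤ):ℂ) * Qf n (i-m) + ((m-n+i:ℤ):ℂ) * Qbf n i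
      = ((2*n-i:ℤ):ℂ) * Qf m (i-n) + ((n-m+i:ℤ):ℂ) * Qbf m i := by
    intro m n i
    have e := CC' (.inr m) (.inr n) (.inr i) (.inr (m+n-i))
    simp only [scc, mixx, cff, shh, subb, wtt] at e
    rw [show m+n-i-m = n-i by ring, show m+n-i-n = m-i by ring] at e
    simp only [hQf, hQbf]
    rw [show n - (i-m) = m+n-i by ring, show m - (i-n) = m+n-i by ring]
    linear_combination (norm := (push_cast; ring1)) -e
  have hE2R : ∀ m n i : ℤ, ((m-n:ℤ):ℂ) * Rf (m+n) i
      = ((2*m-i:ℤ):ℂ) * Rf n (i-m) + ((m-n+i:ℤ):ℂ) * Rf n i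
        - ((2*n-i:ℤ):ℂ) * Bf m (i-n) - ((n-m+i:ℤ):ℂ) * Bbf m i := by
    intro m n i
    have e := CC' (.inl m) (.inr n) (.inr i) (.inr (m+n-i))
    simp only [scc, mixx, cff, shh, subb, wtt] at e
    rw [show m+n-i-m = n-i by ring, show m+n-i-n = m-i by ring] at e
    simp only [hRf, hBf, hBbf]
    rw [show n - (i-m) = m+n-i by ring, show m - (i-n) = m+n-i by ring]
    linear_combination (norm := (push_cast; ring1)) e
  -- the degree-zero computation
  obtain ⟨α, βc, γ, hBα, hBβc, hBγ, hαodd, hγodd, hA, hB, hC, hP, hQ, hR⟩ :=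
    step2 hBA hBB hBC hBQ0 hBR0 hE1A hE1B hE1C haA haBb haC haQb hE2Q hE3b hE3c hE2R
  -- construct the weight-zero element r0
  obtain ⟨r0c, hr0c⟩ : ∃ f : (ℤ⊕ℤ) → (ℤ⊕ℤ) → ℂ, f = fun p q =>
      match p, q with
      | .inl a, .inl b => if b = -a then α a else 0
      | .inl a, .inr b => if b = -a then βc a else 0
      | .inr a, .inl b => if b = -a then -βc (-a) else 0
      | .inr a, .inr b => if b = -a then γ a else 0 := ⟨_, rfl⟩
  have hr0ll : ∀ a b, r0c (.inl a) (.inl b) = if b = -a then α a else 0 := by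
    intro a b; rw [hr0c]
  have hr0lr : ∀ a b, r0c (.inl a) (.inr b) = if b = -a then βc a else 0 := by
    intro a b; rw [hr0c]
  have hr0rl : ∀ a b, r0c (.inr a) (.inl b) = if b = -a then -βc (-a) else 0 := by
    intro a b; rw [hr0c]
  have hr0rr : ∀ a b, r0c (.inr a) (.inr b) = if b = -a then γ a else 0 := by
    intro a b; rw [hr0c]
  obtain ⟨Nα, hNα⟩ := hBα
  obtain ⟨Nβ, hNβ⟩ := hBβc
  obtain ⟨Nγ, hNγ⟩ := hBγ
  obtain ⟨r0, hKr0⟩ : ∃ r0 : g ⊗[ℂ] g, ∀ p q, KK L p q r0 = r0c p q := by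
    refine ⟨(Module.Basis.tensorProduct L L).repr.symm
      (Finsupp.onFinset
        ((Finset.Icc (-(|Nα|+|Nβ|+|Nγ|)) (|Nα|+|Nβ|+|Nγ|)).image
            (fun i => ((Sum.inl i : ℤ⊕ℤ), (Sum.inl (-i) : ℤ⊕ℤ))) ∪
         (Finset.Icc (-(|Nα|+|Nβ|+|Nγ|)) (|Nα|+|Nβ|+|Nγ|)).image
            (fun i => ((Sum.inl i : ℤ⊕ℤ), (Sum.inr (-i) : ℤ⊕ℤ))) ∪
         (Finset.Icc (-(|Nα|+|Nβ|+|Nγ|)) (|Nα|+|Nβ|+|Nγ|)).image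
            (fun i => ((Sum.inr i : ℤ⊕ℤ), (Sum.inl (-i) : ℤ⊕ℤ))) ∪
         (Finset.Icc (-(|Nα|+|Nβ|+|Nγ|)) (|Nα|+|Nβ|+|Nγ|)).image
            (fun i => ((Sum.inr i : ℤ⊕ℤ), (Sum.inr (-i) : ℤ⊕ℤ))))
        (fun pq => r0c pq.1 pq.2)
        ?_), ?_⟩
    · rintro ⟨(a|a), (b|b)⟩ h
      · replace h : r0c (Sum.inl a) (Sum.inl b) ≠ 0 := h
        rw [hr0ll] at h
        by_cases hc : b = -a
        · subst hc
          have ha : α a ≠ 0 := by rwa [if_pos rfl] at h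
          have hb : ¬ (Nα ≤ |a|) := fun hh => ha (hNα a hh)
          have h1 := le_abs_self Nα; have h2 := abs_nonneg Nβ; have h3 := abs_nonneg Nγ
          have h4 := neg_abs_le a; have h5 := le_abs_self a
          apply Finset.mem_union_left; apply Finset.mem_union_left; apply Finset.mem_union_left
          exact Finset.mem_image.mpr ⟨a, Finset.mem_Icc.mpr (by omega), rfl⟩
        · rw [if_neg hc] at h; exact absurd rfl h
      · replace h : r0c (Sum.inl a) (Sum.inr b) ≠ 0 := h
        rw [hr0lr] at h
        by_cases hc : b = -a
        · subst hc
          have ha : βc a ≠ 0 := by rwa [if_pos rfl] at h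
          have hb : ¬ (Nβ ≤ |a|) := fun hh => ha (hNβ a hh)
          have h1 := le_abs_self Nβ; have h2 := abs_nonneg Nα; have h3 := abs_nonneg Nγ
          have h4 := neg_abs_le a; have h5 := le_abs_self a
          apply Finset.mem_union_left; apply Finset.mem_union_left; apply Finset.mem_union_right
          exact Finset.mem_image.mpr ⟨a, Finset.mem_Icc.mpr (by omega), rfl⟩
        · rw [if_neg hc] at h; exact absurd rfl h
      · replace h : r0c (Sum.inr a) (Sum.inl b) ≠ 0 := h
        rw [hr0rl] at h
        by_cases hc : b = -a
        · subst hc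
          have ha : βc (-a) ≠ 0 := by
            rw [if_pos rfl] at h
            intro hz; rw [hz] at h; exact h (by ring)
          have hb : ¬ (Nβ ≤ |-a|) := fun hh => ha (hNβ (-a) hh)
          rw [abs_neg] at hb
          have h1 := le_abs_self Nβ; have h2 := abs_nonneg Nα; have h3 := abs_nonneg Nγ
          have h4 := neg_abs_le a; have h5 := le_abs_self a
          apply Finset.mem_union_left; apply Finset.mem_union_right
          exact Finset.mem_image.mpr ⟨a, Finset.mem_Icc.mpr (by omega), rfl⟩
        · rw [if_neg hc] at h; exact absurd rfl h
      · replace h : r0c (Sum.inr a) (Sum.inr b) ≠ 0 := h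
        rw [hr0rr] at h
        by_cases hc : b = -a
        · subst hc
          have ha : γ a ≠ 0 := by rwa [if_pos rfl] at h
          have hb : ¬ (Nγ ≤ |a|) := fun hh => ha (hNγ a hh)
          have h1 := le_abs_self Nγ; have h2 := abs_nonneg Nα; have h3 := abs_nonneg Nβ
          have h4 := neg_abs_le a; have h5 := le_abs_self a
          apply Finset.mem_union_right
          exact Finset.mem_image.mpr ⟨a, Finset.mem_Icc.mpr (by omega), rfl⟩
        · rw [if_neg hc] at h; exact absurd rfl h
    · intro p q
      simp only [KK, Module.Basis.coord_apply]
      rw [LinearEquiv.apply_symm_apply, Finsupp.onFinset_apply]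
  -- symmetry properties of r0c
  have hr0anti : ∀ p q, r0c q p = - r0c p q := by
    rintro (a|a) (b|b)
    · rw [hr0ll, hr0ll]
      by_cases hc : b = -a
      · rw [if_pos hc, if_pos (by omega : a = -b), hc, hαodd]
      · rw [if_neg hc, if_neg (by omega : ¬ a = -b)]; ring
    · rw [hr0rl, hr0lr]
      by_cases hc : b = -a
      · rw [if_pos hc, if_pos (by omega : a = -b), hc, neg_neg]
      · rw [if_neg hc, if_neg (by omega : ¬ a = -b)]; ring
    · rw [hr0lr, hr0rl]
      by_cases hc : b = -a
      · rw [if_pos hc, if_pos (by omega : a = -b), hc, neg_neg]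
      · rw [if_neg hc, if_neg (by omega : ¬ a = -b)]; ring
    · rw [hr0rr, hr0rr]
      by_cases hc : b = -a
      · rw [if_pos hc, if_pos (by omega : a = -b), hc, hγodd]
      · rw [if_neg hc, if_neg (by omega : ¬ a = -b)]; ring
  have hσsymm : ∀ p q, σ (q,p) = σ (p,q) := by
    intro p q
    rw [hσ]
    simp only
    rw [show wtt q + wtt p = wtt p + wtt q by ring]
  -- the base-point identity
  have key : ∀ (i p q : ℤ⊕ℤ), D' i p q = cff i p * r0c (shh i p) q + cff i q * r0c p (shh i q) := by
    rintro (m|m) (a|a) (b|b) <;> simp only [cff, shh, subb, wtt]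
    · -- A family
      rw [hr0ll, hr0ll]
      by_cases hw : a + b = m
      · have hb : b = m - a := by omega
        subst hb
        rw [if_pos (by omega : m - a = -(a-m)), if_pos (by omega : m - a - m = -a)]
        have e := hA m a
        simp only [hAf] at e
        rw [e]
        simp only [dco]
        push_cast; ring
      · rw [if_neg (by omega : ¬ b = -(a-m)), if_neg (by omega : ¬ b - m = -a),
          hD'deg _ _ _ (by simp [wtt]; omega)]
        ring
    · -- B family
      rw [hr0lr, hr0lr]
      by_cases hw : a + b = m
      · have hb : b = m - a := by omega
        subst hb
        rw [if_pos (by omega : m - a = -(a-m)), if_pos (by omega : m - a - m = -a)]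
        have e := hB m a
        simp only [hBf] at e
        rw [e]
        simp only [dco]
        push_cast; ring
      · rw [if_neg (by omega : ¬ b = -(a-m)), if_neg (by omega : ¬ b - m = -a),
          hD'deg _ _ _ (by simp [wtt]; omega)]
        ring
    · -- Bb family
      rw [hr0rl, hr0rl]
      by_cases hw : a + b = m
      · have hb : b = m - a := by omega
        subst hb
        rw [if_pos (by omega : m - a = -(a-m)), if_pos (by omega : m - a - m = -a)]
        have e1 := haBb m a
        have e2 := hB m (m-a)
        simp only [hBbf, hBf] at e1
        simp only [hBf] at e2
        rw [show m - (m-a) = a by ring] at e1 e2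
        rw [e1, e2]
        simp only [dco]
        rw [show m - a - m = -a by ring, show -(a-m) = m - a by ring]
        push_cast; ring
      · rw [if_neg (by omega : ¬ b = -(a-m)), if_neg (by omega : ¬ b - m = -a),
          hD'deg _ _ _ (by simp [wtt]; omega)]
        ring
    · -- C family
      rw [hr0rr, hr0rr]
      by_cases hw : a + b = m
      · have hb : b = m - a := by omega
        subst hb
        rw [if_pos (by omega : m - a = -(a-m)), if_pos (by omega : m - a - m = -a)]
        have e := hC m a
        simp only [hCf] at e
        rw [e]
        simp only [dco]
        push_cast; ring
      · rw [if_neg (by omega : ¬ b = -(a-m)), if_neg (by omega : ¬ b - m = -a),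
          hD'deg _ _ _ (by simp [wtt]; omega)]
        ring
    · -- P family
      by_cases hw : a + b = m
      · have hb : b = m - a := by omega
        subst hb
        have e := hP m a
        simp only [hPf] at e
        rw [e]
        ring
      · rw [hD'deg _ _ _ (by simp [wtt]; omega)]
        ring
    · -- Q family
      rw [hr0ll]
      by_cases hw : a + b = m
      · have hb : b = m - a := by omega
        subst hb
        rw [if_pos (by omega : m - a - m = -a)]
        have e := hQ m a
        simp only [hQf] at e
        rw [e]
        push_cast; ring
      · rw [if_neg (by omega : ¬ b - m = -a),
          hD'deg _ _ _ (by simp [wtt]; omega)]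
        ring
    · -- Qb family
      rw [hr0ll]
      by_cases hw : a + b = m
      · have hb : b = m - a := by omega
        subst hb
        rw [if_pos (by omega : m - a = -(a-m))]
        have e1 := haQb m a
        have e2 := hQ m (m-a)
        simp only [hQbf, hQf] at e1 e2
        rw [show m - (m-a) = a by ring] at e1 e2
        rw [e1, e2]
        rw [show a - m = -(m-a) by ring, hαodd]
        push_cast; ring
      · rw [if_neg (by omega : ¬ b = -(a-m)),
          hD'deg _ _ _ (by simp [wtt]; omega)]
        ring
    · -- R family
      rw [hr0lr, hr0rl]
      by_cases hw : a + b = m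
      · have hb : b = m - a := by omega
        subst hb
        rw [if_pos (by omega : m - a = -(a-m)), if_pos (by omega : m - a - m = -a)]
        have e := hR m a
        simp only [hRf] at e
        rw [e]
        push_cast; ring
      · rw [if_neg (by omega : ¬ b = -(a-m)), if_neg (by omega : ¬ b - m = -a),
          hD'deg _ _ _ (by simp [wtt]; omega)]
        ring
  -- conclusion
  refine ⟨r' + r0, ?_, ?_⟩
  · apply KK_ext L
    intro p q
    have lhs1 : KK L p q (TensorProduct.comm ℂ g g (r' + r0))
        = σ (q,p) * KK L q p (δ (L (.inl 0))) + r0c q p := by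
      rw [map_add, map_add, KK_comm, KK_comm, hKr' q p, hKr0]
    have rhs1 : KK L p q (-(r' + r0))
        = -(σ (p,q) * KK L p q (δ (L (.inl 0))) + r0c p q) := by
      rw [map_neg, map_add, hKr' p q, hKr0]
    rw [lhs1, rhs1, hσsymm p q, hanti_δ (.inl 0) p q, hr0anti p q]
    ring
  · have hbase : ∀ i : ℤ⊕ℤ, δ (L i) = rho β (L i) (r' + r0) := by
      intro i
      apply KK_ext L
      intro p q
      have exp : KK L p q (rho β (L i) (r' + r0))
          = KK L p q (rho β (L i) r')
            + (cff i p * r0c (shh i p) q + cff i q * r0c p (shh i q)) := by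
        rw [map_add (rho β (L i)) r' r0, map_add, coordX L β hβ i p q r0, hKr0, hKr0]
      have k := key i p q
      rw [hD'app] at k
      rw [exp]
      linear_combination k
    intro x
    have hadd : ∀ a b : g, rho β (a + b) (r' + r0) = rho β a (r' + r0) + rho β b (r' + r0) := by
      intro a b
      simp only [rho, map_add, LinearMap.rTensor_add, LinearMap.lTensor_add,
        LinearMap.add_apply]
      abel
    have hsmul : ∀ (c : ℂ) (a : g), rho β (c • a) (r' + r0) = c • rho β a (r' + r0) := by
      intro c a
      simp only [rho, map_smul, LinearMap.rTensor_smul, LinearMap.lTensor_smul,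
        LinearMap.add_apply, LinearMap.smul_apply, smul_add]
    have hmap : δ = LinearMap.mk ⟨fun x => rho β x (r' + r0), fun a b => hadd a b⟩
        (fun c a => hsmul c a) := by
      apply Module.Basis.ext L
      intro i
      exact hbase i
    rw [hmap]
    rfl
end

section
/- The map δ_α defined on the centrally extended 3D BMS algebra B₃ᶜ by δ_α(l_m) = 0, δ_α(c) = 0, δ_α(T_m) = α c ∧ T_m is a 1-cocycle with values in ∧²B₃ᶜ, and it is not a coboundary. -/
open TensorProduct

/-- The map `δ_α` on the centrally extended 3D BMS algebra `B₃ᶜ` defined by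
`δ_α(l_m) = 0`, `δ_α(c) = 0`, `δ_α(T_m) = α c ∧ T_m` (with `α ≠ 0`) is a 1-cocycle
with values in `∧²B₃ᶜ` and is not a coboundary.
Basis: `l_m = L (.inl (.inl m))`, `T_m = L (.inl (.inr m))`, `c = L (.inr ())`. -/
theorem bms3c_delta_alpha_cocycle_not_coboundary
    (g : Type) [AddCommGroup g] [Module ℂ g]
    (L : Module.Basis ((ℤ ⊕ ℤ) ⊕ Unit) ℂ g)
    (β : g →ₗ[ℂ] g →ₗ[ℂ] g)
    (hll : ∀ m n : ℤ, β (L (.inl (.inl m))) (L (.inl (.inl n))) =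
      ((m - n : ℤ) : ℂ) • L (.inl (.inl (m + n))))
    (hlT : ∀ m n : ℤ, β (L (.inl (.inl m))) (L (.inl (.inr n))) =
      ((m - n : ℤ) : ℂ) • L (.inl (.inr (m + n))) +
      (if m + n = 0 then ((m ^ 3 - m : ℤ) : ℂ) • L (.inr ()) else 0))
    (hTl : ∀ m n : ℤ, β (L (.inl (.inr m))) (L (.inl (.inl n))) =
      ((m - n : ℤ) : ℂ) • L (.inl (.inr (m + n))) +
      (if m + n = 0 then ((m ^ 3 - m : ℤ) : ℂ) • L (.inr ()) else 0))
    (hTT : ∀ m n : ℤ, β (L (.inl (.inr m))) (L (.inl (.inr n))) = 0)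
    (hcl : ∀ x : g, β (L (.inr ())) x = 0)
    (hcr : ∀ x : g, β x (L (.inr ())) = 0)
    (α : ℂ) (hα : α ≠ 0)
    (δα : g →ₗ[ℂ] g ⊗[ℂ] g)
    (hδαl : ∀ m : ℤ, δα (L (.inl (.inl m))) = 0)
    (hδαT : ∀ m : ℤ, δα (L (.inl (.inr m))) =
      α • (L (.inr ()) ⊗ₜ[ℂ] L (.inl (.inr m)) - L (.inl (.inr m)) ⊗ₜ[ℂ] L (.inr ())))
    (hδαc : δα (L (.inr ())) = 0) :
    (∀ x y : g, δα (β x y)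
        = (LinearMap.rTensor g (β x) + LinearMap.lTensor g (β x)) (δα y)
        - (LinearMap.rTensor g (β y) + LinearMap.lTensor g (β y)) (δα x)) ∧
    (¬ ∃ r : g ⊗[ℂ] g, TensorProduct.comm ℂ g g r = -r ∧
      ∀ x : g, δα x = (LinearMap.rTensor g (β x) + LinearMap.lTensor g (β x)) r) := by
  -- `D x = rTensor g (β x) + lTensor g (β x)`, as a linear map in `x`.
  set D : g →ₗ[ℂ] (g ⊗[ℂ] g →ₗ[ℂ] g ⊗[ℂ] g) :=
    (LinearMap.rTensorHom g + LinearMap.lTensorHom g) ∘ₗ β with hD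
  have hDapp : ∀ x : g, D x = LinearMap.rTensor g (β x) + LinearMap.lTensor g (β x) :=
    fun x => rfl
  constructor
  · -- the cocycle identity, as an equality of bilinear maps
    have key : β.compr₂ δα = D.compl₂ δα - (D.compl₂ δα).flip := by
      apply LinearMap.ext_basis L L
      rintro ((m | m) | ⟨⟩) ((n | n) | ⟨⟩) <;>
        simp only [LinearMap.compr₂_apply, LinearMap.sub_apply, LinearMap.compl₂_apply,
          LinearMap.flip_apply, hDapp, LinearMap.add_apply]
      · -- l, l
        simp [hll, hδαl]
      · -- l, T
        by_cases h : m + n = 0 <;>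
          simp only [hll, hlT, hTl, hTT, hcl, hcr, hδαl, hδαT, hδαc, h, if_true, if_false,
            eq_self_iff_true, map_add, map_smul, map_sub, map_zero, smul_zero,
            add_zero, sub_zero, zero_sub, zero_add, LinearMap.rTensor_tmul,
            LinearMap.lTensor_tmul, TensorProduct.zero_tmul, TensorProduct.tmul_zero,
            TensorProduct.tmul_add, TensorProduct.add_tmul, TensorProduct.tmul_smul,
            ← TensorProduct.smul_tmul'] <;>
        module
      · -- l, c
        simp [hcr, hδαl, hδαc]
      · -- T, l
        have hnm : n + m = m + n := add_comm n m
        by_cases h : m + n = 0 <;>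
          simp only [hnm, hll, hlT, hTl, hTT, hcl, hcr, hδαl, hδαT, hδαc, h, if_true, if_false,
            eq_self_iff_true, map_add, map_smul, map_sub, map_zero, smul_zero,
            add_zero, sub_zero, zero_sub, zero_add, LinearMap.rTensor_tmul,
            LinearMap.lTensor_tmul, TensorProduct.zero_tmul, TensorProduct.tmul_zero,
            TensorProduct.tmul_add, TensorProduct.add_tmul, TensorProduct.tmul_smul,
            ← TensorProduct.smul_tmul'] <;>
        · push_cast
          module
      · -- T, T
        simp only [hTT, hcl, hcr, hδαT, map_add, map_smul, map_sub, map_zero,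
          LinearMap.rTensor_tmul, LinearMap.lTensor_tmul, TensorProduct.zero_tmul,
          TensorProduct.tmul_zero]
        simp
      · -- T, c
        simp only [hcl, hcr, hδαT, hδαc, map_add, map_smul, map_sub, map_zero,
          LinearMap.rTensor_tmul, LinearMap.lTensor_tmul, TensorProduct.zero_tmul,
          TensorProduct.tmul_zero]
        simp
      · -- c, l
        simp [hcl, hδαl, hδαc]
      · -- c, T
        simp only [hcl, hcr, hδαT, hδαc, map_add, map_smul, map_sub, map_zero,
          LinearMap.rTensor_tmul, LinearMap.lTensor_tmul, TensorProduct.zero_tmul,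
          TensorProduct.tmul_zero]
        simp
      · -- c, c
        simp [hcl, hδαc]
    intro x y
    have := LinearMap.congr_fun (LinearMap.congr_fun key x) y
    simpa only [LinearMap.compr₂_apply, LinearMap.sub_apply, LinearMap.compl₂_apply,
      LinearMap.flip_apply, hDapp] using this
  · -- not a coboundary
    rintro ⟨r, -, hr⟩
    set T0 : g := L (.inl (.inr 0)) with hT0
    -- coordinate functionals
    set f : g →ₗ[ℂ] ℂ := L.coord (.inr ()) with hf
    set f' : g →ₗ[ℂ] ℂ := L.coord (.inl (.inr 0)) with hf'
    have hfβ : f ∘ₗ β T0 = 0 := by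
      apply L.ext
      rintro ((n | n) | ⟨⟩) <;>
        simp [hT0, hf, hTl, hTT, hcr, Module.Basis.coord_apply, Module.Basis.repr_self, Finsupp.single_apply]
    have hf'β : f' ∘ₗ β T0 = 0 := by
      apply L.ext
      rintro ((n | n) | ⟨⟩) <;>
        simp only [hT0, hf', hTl, hTT, hcr, LinearMap.comp_apply, LinearMap.zero_apply,
          map_zero, map_add, map_smul, Module.Basis.coord_apply, Module.Basis.repr_self]
      · rcases eq_or_ne n 0 with h | h
        · subst h; simp
        · simp [Finsupp.single_apply, h, Ne.symm h]
    -- the evaluation functional on the tensor square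
    set φ : g ⊗[ℂ] g →ₗ[ℂ] ℂ := (LinearMap.mul' ℂ ℂ) ∘ₗ TensorProduct.map f f' with hφ
    have hφtmul : ∀ x y : g, φ (x ⊗ₜ[ℂ] y) = f x * f' y := by
      intro x y; simp [hφ, LinearMap.mul'_apply]
    have hφD : φ ∘ₗ (LinearMap.rTensor g (β T0) + LinearMap.lTensor g (β T0)) = 0 := by
      apply TensorProduct.ext'
      intro x y
      simp only [LinearMap.comp_apply, LinearMap.add_apply, LinearMap.zero_apply,
        LinearMap.rTensor_tmul, LinearMap.lTensor_tmul, map_add, hφtmul]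
      have h1 : f (β T0 x) = 0 := LinearMap.congr_fun hfβ x
      have h2 : f' (β T0 y) = 0 := LinearMap.congr_fun hf'β y
      rw [h1, h2]
      ring
    have h0 := congrArg φ (hr T0)
    rw [hT0, hδαT 0, ← hT0] at h0
    have hrhs : φ ((LinearMap.rTensor g (β T0) + LinearMap.lTensor g (β T0)) r) = 0 :=
      LinearMap.congr_fun hφD r
    rw [hrhs, map_smul, map_sub, hφtmul, hφtmul] at h0
    have hfc : f (L (.inr ())) = 1 := by simp [hf]
    have hfT : f T0 = 0 := by simp [hf, hT0, Finsupp.single_apply]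
    have hf'T : f' T0 = 1 := by simp [hf', hT0]
    have hf'c : f' (L (.inr ())) = 0 := by simp [hf', Finsupp.single_apply]
    rw [hfc, hfT, hf'T, hf'c] at h0
    simp at h0
    exact hα h0
end

section
/- An element r ∈ ∧²g of a Lie algebra g defines a coboundary Lie bialgebra via δ_r(x) = [x ⊗ 1 + 1 ⊗ x, r] if and only if the Schouten bracket [[r,r]] = [r₁₂, r₁₃] + [r₁₂, r₂₃] + [r₁₃, r₂₃] is ad-invariant; this follows from the identity Cycl((δ_r ⊗ id) ∘ δ_r (x)) + [x ⊗ 1 ⊗ 1 + 1 ⊗ x ⊗ 1 + 1 ⊗ 1 ⊗ x, [[r,r]]] = 0 for all x ∈ g. -/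
open TensorProduct

noncomputable def Bm (g : Type) [LieRing g] [LieAlgebra ℂ g] :
    g →ₗ[ℂ] (g ⊗[ℂ] g) →ₗ[ℂ] g ⊗[ℂ] g :=
  LinearMap.mk₂ ℂ (fun x p =>
      (LinearMap.rTensor g (LieAlgebra.ad ℂ g x)
        + LinearMap.lTensor g (LieAlgebra.ad ℂ g x)) p)
    (by intro x y p; simp [map_add, LinearMap.rTensor_add, LinearMap.lTensor_add]; try abel)
    (by intro c x p; simp [map_smul, LinearMap.rTensor_smul, LinearMap.lTensor_smul]; try module)
    (by intro x p q; simp [map_add]; try abel)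
    (by intro c x p; simp)

noncomputable def Adx (g : Type) [LieRing g] [LieAlgebra ℂ g] (x : g) :
    g ⊗[ℂ] (g ⊗[ℂ] g) →ₗ[ℂ] g ⊗[ℂ] (g ⊗[ℂ] g) :=
  LinearMap.rTensor (g ⊗[ℂ] g) (LieAlgebra.ad ℂ g x)
    + LinearMap.lTensor g (LinearMap.rTensor g (LieAlgebra.ad ℂ g x))
    + LinearMap.lTensor g (LinearMap.lTensor g (LieAlgebra.ad ℂ g x))

noncomputable def Mm (g : Type) [LieRing g] [LieAlgebra ℂ g] (x : g)
    (cyc : g ⊗[ℂ] (g ⊗[ℂ] g) →ₗ[ℂ] g ⊗[ℂ] (g ⊗[ℂ] g))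
    (S : g ⊗[ℂ] g →ₗ[ℂ] g ⊗[ℂ] g →ₗ[ℂ] g ⊗[ℂ] (g ⊗[ℂ] g)) :
    (g ⊗[ℂ] g) →ₗ[ℂ] (g ⊗[ℂ] g) →ₗ[ℂ] g ⊗[ℂ] (g ⊗[ℂ] g) :=
  LinearMap.mk₂ ℂ (fun p q =>
      cyc ((TensorProduct.assoc ℂ g g g)
        ((TensorProduct.map ((Bm g).flip p) LinearMap.id) ((Bm g) x q)))
      + Adx g x (S p q))
    (by
      intro p p' q
      simp [map_add, TensorProduct.map_add_left, LinearMap.add_apply]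
      abel)
    (by
      intro c p q
      simp [map_smul, TensorProduct.map_smul_left, LinearMap.smul_apply, smul_add])
    (by intro p q q'; simp [map_add]; abel)
    (by intro c p q; simp)

set_option maxRecDepth 100000 in
set_option maxHeartbeats 1000000 in
lemma purekey (g : Type) [LieRing g] [LieAlgebra ℂ g] (x a b c d : g)
    (cyc : g ⊗[ℂ] (g ⊗[ℂ] g) →ₗ[ℂ] g ⊗[ℂ] (g ⊗[ℂ] g))
    (hcyc : ∀ a b c : g, cyc (a ⊗ₜ[ℂ] (b ⊗ₜ[ℂ] c)) =
      a ⊗ₜ[ℂ] (b ⊗ₜ[ℂ] c) + c ⊗ₜ[ℂ] (a ⊗ₜ[ℂ] b) + b ⊗ₜ[ℂ] (c ⊗ₜ[ℂ] a))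
    (S : g ⊗[ℂ] g →ₗ[ℂ] g ⊗[ℂ] g →ₗ[ℂ] g ⊗[ℂ] (g ⊗[ℂ] g))
    (hS : ∀ a b c d : g, S (a ⊗ₜ[ℂ] b) (c ⊗ₜ[ℂ] d) =
      ⁅a, c⁆ ⊗ₜ[ℂ] (b ⊗ₜ[ℂ] d) + a ⊗ₜ[ℂ] (⁅b, c⁆ ⊗ₜ[ℂ] d) + a ⊗ₜ[ℂ] (c ⊗ₜ[ℂ] ⁅b, d⁆)) :
    Mm g x cyc S (a ⊗ₜ[ℂ] b - b ⊗ₜ[ℂ] a) (c ⊗ₜ[ℂ] d - d ⊗ₜ[ℂ] c)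
      + Mm g x cyc S (c ⊗ₜ[ℂ] d - d ⊗ₜ[ℂ] c) (a ⊗ₜ[ℂ] b - b ⊗ₜ[ℂ] a) = 0 := by
  simp only [Mm, Adx, Bm, LinearMap.mk₂_apply, LinearMap.flip_apply, LinearMap.add_apply,
    map_add, map_sub, LinearMap.sub_apply, LinearMap.rTensor_tmul, LinearMap.lTensor_tmul,
    LieAlgebra.ad_apply, TensorProduct.map_tmul, LinearMap.id_coe, id_eq,
    TensorProduct.assoc_tmul, add_tmul, tmul_add, sub_tmul, tmul_sub, neg_tmul, tmul_neg,
    hcyc, hS, lie_sub, sub_lie, lie_add, add_lie, lie_neg, neg_lie, lie_lie]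
  have jacg : ∀ u v : g, ⁅x, ⁅u, v⁆⁆ = ⁅u, ⁅x, v⁆⁆ - ⁅v, ⁅x, u⁆⁆ := by
    intro u v
    rw [leibniz_lie, ← lie_skew ⁅x, u⁆ v]
    abel
  simp only [jacg, show ⁅c,a⁆ = -⁅a,c⁆ from (lie_skew a c) ▸ (neg_neg _).symm,
    show ⁅d,a⁆ = -⁅a,d⁆ from (lie_skew a d) ▸ (neg_neg _).symm,
    show ⁅c,b⁆ = -⁅b,c⁆ from (lie_skew b c) ▸ (neg_neg _).symm,
    show ⁅d,b⁆ = -⁅b,d⁆ from (lie_skew b d) ▸ (neg_neg _).symm,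
    lie_neg, neg_lie, lie_sub, sub_lie, tmul_neg, neg_tmul, tmul_sub, sub_tmul, neg_neg]
  abel

/-- An antisymmetric `r ∈ ∧²g` defines a coboundary Lie bialgebra via
`δ_r(x) = [x ⊗ 1 + 1 ⊗ x, r]` (i.e. `δ_r` satisfies the co-Jacobi identity) if and
only if the Schouten bracket `[[r,r]] = [r₁₂,r₁₃] + [r₁₂,r₂₃] + [r₁₃,r₂₃]` is
ad-invariant; this follows from the identity
`Cycl((δ_r ⊗ id)(δ_r x)) + x ▷ [[r,r]] = 0` for all `x ∈ g`. -/
theorem coboundary_lie_bialgebra_iff_schouten_ad_invariant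
    (g : Type) [LieRing g] [LieAlgebra ℂ g]
    (r : g ⊗[ℂ] g)
    (hr : TensorProduct.comm ℂ g g r = -r)
    -- the cyclic sum on `g ⊗ g ⊗ g`
    (cyc : g ⊗[ℂ] (g ⊗[ℂ] g) →ₗ[ℂ] g ⊗[ℂ] (g ⊗[ℂ] g))
    (hcyc : ∀ a b c : g, cyc (a ⊗ₜ[ℂ] (b ⊗ₜ[ℂ] c)) =
      a ⊗ₜ[ℂ] (b ⊗ₜ[ℂ] c) + c ⊗ₜ[ℂ] (a ⊗ₜ[ℂ] b) + b ⊗ₜ[ℂ] (c ⊗ₜ[ℂ] a))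
    -- the Schouten bracket as a bilinear map, on pure tensors
    (S : g ⊗[ℂ] g →ₗ[ℂ] g ⊗[ℂ] g →ₗ[ℂ] g ⊗[ℂ] (g ⊗[ℂ] g))
    (hS : ∀ a b c d : g, S (a ⊗ₜ[ℂ] b) (c ⊗ₜ[ℂ] d) =
      ⁅a, c⁆ ⊗ₜ[ℂ] (b ⊗ₜ[ℂ] d) + a ⊗ₜ[ℂ] (⁅b, c⁆ ⊗ₜ[ℂ] d) + a ⊗ₜ[ℂ] (c ⊗ₜ[ℂ] ⁅b, d⁆))
    -- `δ_r`
    (δr : g →ₗ[ℂ] g ⊗[ℂ] g)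
    (hδr : ∀ x : g, δr x =
      (LinearMap.rTensor g (LieAlgebra.ad ℂ g x)
        + LinearMap.lTensor g (LieAlgebra.ad ℂ g x)) r) :
    -- the identity `Cycl((δ_r ⊗ id) δ_r x) + x ▷ [[r,r]] = 0`
    (∀ x : g, cyc ((TensorProduct.assoc ℂ g g g)
        ((TensorProduct.map δr LinearMap.id) (δr x)))
      + (LinearMap.rTensor (g ⊗[ℂ] g) (LieAlgebra.ad ℂ g x)
          + LinearMap.lTensor g (LinearMap.rTensor g (LieAlgebra.ad ℂ g x))
          + LinearMap.lTensor g (LinearMap.lTensor g (LieAlgebra.ad ℂ g x))) (S r r)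
      = 0) ∧
    -- hence: co-Jacobi for `δ_r` ⇔ ad-invariance of `[[r,r]]`
    ((∀ x : g, cyc ((TensorProduct.assoc ℂ g g g)
        ((TensorProduct.map δr LinearMap.id) (δr x))) = 0)
      ↔ (∀ x : g,
        (LinearMap.rTensor (g ⊗[ℂ] g) (LieAlgebra.ad ℂ g x)
          + LinearMap.lTensor g (LinearMap.rTensor g (LieAlgebra.ad ℂ g x))
          + LinearMap.lTensor g (LinearMap.lTensor g (LieAlgebra.ad ℂ g x))) (S r r)
        = 0)) := by
  have hδ : δr = (Bm g).flip r := by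
    ext u
    rw [hδr]
    simp [Bm, LinearMap.flip_apply, LinearMap.mk₂_apply]
  have hMx : ∀ x : g, cyc ((TensorProduct.assoc ℂ g g g)
        ((TensorProduct.map δr LinearMap.id) (δr x)))
      + (LinearMap.rTensor (g ⊗[ℂ] g) (LieAlgebra.ad ℂ g x)
          + LinearMap.lTensor g (LinearMap.rTensor g (LieAlgebra.ad ℂ g x))
          + LinearMap.lTensor g (LinearMap.lTensor g (LieAlgebra.ad ℂ g x))) (S r r)
      = Mm g x cyc S r r := by
    intro x
    rw [hδ]
    simp only [Mm, Adx, LinearMap.mk₂_apply, LinearMap.flip_apply, Bm, LinearMap.add_apply]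
  have Mzero : ∀ x : g, Mm g x cyc S r r = 0 := by
    intro x
    set M := Mm g x cyc S with hMdef
    have key : ∀ p q : g ⊗[ℂ] g,
        M (p - TensorProduct.comm ℂ g g p) (q - TensorProduct.comm ℂ g g q)
        + M (q - TensorProduct.comm ℂ g g q) (p - TensorProduct.comm ℂ g g p) = 0 := by
      intro p q
      induction p using TensorProduct.induction_on generalizing q with
      | zero => simp
      | tmul a b =>
        induction q using TensorProduct.induction_on with
        | zero => simp
        | tmul c d =>
          simp only [TensorProduct.comm_tmul]
          exact purekey g x a b c d cyc hcyc S hS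
        | add q1 q2 h1 h2 =>
          rw [map_add, show q1 + q2 - (TensorProduct.comm ℂ g g q1
              + TensorProduct.comm ℂ g g q2)
            = (q1 - TensorProduct.comm ℂ g g q1) + (q2 - TensorProduct.comm ℂ g g q2) by abel,
            map_add, map_add, LinearMap.add_apply]
          have h := congrArg₂ (· + ·) h1 h2
          simp only [add_zero] at h
          rw [← h]
          abel
      | add p1 p2 h1 h2 =>
        rw [map_add, show p1 + p2 - (TensorProduct.comm ℂ g g p1
            + TensorProduct.comm ℂ g g p2)
          = (p1 - TensorProduct.comm ℂ g g p1) + (p2 - TensorProduct.comm ℂ g g p2) by abel,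
          map_add, LinearMap.add_apply, map_add]
        have h := congrArg₂ (· + ·) (h1 q) (h2 q)
        simp only [add_zero] at h
        rw [← h]
        abel
    have hkey := key r r
    rw [hr, sub_neg_eq_add] at hkey
    simp only [map_add, LinearMap.add_apply] at hkey
    have h8 : (8 : ℂ) • M r r = 0 := by
      rw [show (8 : ℂ) = ((8 : ℕ) : ℂ) by norm_num, Nat.cast_smul_eq_nsmul]
      rw [show (8 : ℕ) • M r r
        = M r r + M r r + (M r r + M r r) + (M r r + M r r + (M r r + M r r)) by abel]
      exact hkey
    have := smul_eq_zero.mp h8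
    rcases this with h | h
    · exact absurd h (by norm_num)
    · exact h
  constructor
  · intro x
    rw [hMx x]
    exact Mzero x
  · have part1 : ∀ x : g, cyc ((TensorProduct.assoc ℂ g g g)
        ((TensorProduct.map δr LinearMap.id) (δr x)))
      + (LinearMap.rTensor (g ⊗[ℂ] g) (LieAlgebra.ad ℂ g x)
          + LinearMap.lTensor g (LinearMap.rTensor g (LieAlgebra.ad ℂ g x))
          + LinearMap.lTensor g (LinearMap.lTensor g (LieAlgebra.ad ℂ g x))) (S r r)
      = 0 := fun x => (hMx x).trans (Mzero x)
    constructor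
    · intro h x
      have := part1 x
      rw [h x, zero_add] at this
      exact this
    · intro h x
      have := part1 x
      rw [h x, add_zero] at this
      exact this
end

section
/- In the 3D BMS algebra B₃, the element r = χ(l_n ∧ T_0 − l_0 ∧ T_n) (the light-cone r-matrix) satisfies the classical Yang–Baxter equation [[r, r]] = 0, i.e. it is a triangular classical r-matrix. -/
open TensorProduct

/-- In the 3D BMS algebra `B₃` (basis `l_m = L (.inl m)`, `T_m = L (.inr m)`), the
light-cone r-matrix `r = χ (l_n ∧ T_0 − l_0 ∧ T_n)` satisfies the classical
Yang–Baxter equation `[[r, r]] = 0`, i.e. it is a triangular classical r-matrix.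
Here the Schouten bracket `[[·,·]]` is the bilinear map `S` determined on pure
tensors by `S(a⊗b, c⊗d) = ⁅a,c⁆⊗b⊗d + a⊗⁅b,c⁆⊗d + a⊗c⊗⁅b,d⁆`. -/
theorem bms3_lightcone_r_matrix_triangular
    (g : Type) [AddCommGroup g] [Module ℂ g]
    (L : Module.Basis (ℤ ⊕ ℤ) ℂ g)
    (β : g →ₗ[ℂ] g →ₗ[ℂ] g)
    (hll : ∀ m n : ℤ, β (L (.inl m)) (L (.inl n)) = ((m - n : ℤ) : ℂ) • L (.inl (m + n)))
    (hlT : ∀ m n : ℤ, β (L (.inl m)) (L (.inr n)) = ((m - n : ℤ) : ℂ) • L (.inr (m + n)))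
    (hTl : ∀ m n : ℤ, β (L (.inr m)) (L (.inl n)) = ((m - n : ℤ) : ℂ) • L (.inr (m + n)))
    (hTT : ∀ m n : ℤ, β (L (.inr m)) (L (.inr n)) = 0)
    (S : g ⊗[ℂ] g →ₗ[ℂ] g ⊗[ℂ] g →ₗ[ℂ] g ⊗[ℂ] (g ⊗[ℂ] g))
    (hS : ∀ a b c d : g, S (a ⊗ₜ[ℂ] b) (c ⊗ₜ[ℂ] d) =
      (β a c) ⊗ₜ[ℂ] (b ⊗ₜ[ℂ] d) + a ⊗ₜ[ℂ] ((β b c) ⊗ₜ[ℂ] d) + a ⊗ₜ[ℂ] (c ⊗ₜ[ℂ] (β b d)))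
    (χ : ℂ) (n : ℤ)
    (r : g ⊗[ℂ] g)
    (hr : r = χ • ((L (.inl n) ⊗ₜ[ℂ] L (.inr 0) - L (.inr 0) ⊗ₜ[ℂ] L (.inl n))
      - (L (.inl 0) ⊗ₜ[ℂ] L (.inr n) - L (.inr n) ⊗ₜ[ℂ] L (.inl 0)))) :
    S r r = 0 := by
  subst hr
  simp only [map_smul, LinearMap.smul_apply, map_sub, LinearMap.sub_apply, hS, hll, hlT, hTl,
    hTT, ← smul_tmul', tmul_smul, map_smul, LinearMap.smul_apply, smul_smul]
  simp only [zero_smul, neg_smul, ← smul_tmul', tmul_smul, zero_tmul, tmul_zero, zero_sub,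
    sub_zero, add_zero, zero_add, smul_sub, smul_add, neg_sub, sub_self, smul_zero, smul_smul,
    neg_tmul, tmul_neg]
  module
end
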